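/- arXiv:2007.03917 — 4 statements merged into one kernel-verified Lean document; each statement's English description precedes it below -/
import Mathlib

section
/- The unital associative ℂ-algebra A_k has a Poincaré–Birkhoff–Witt basis: the monomials (G⁻)^a J^b L^c (G⁺)^d, for a, b, c, d ranging over the natural numbers, form a basis of A_k as a ℂ-vector space (equivalently, A_k ≅ ℂ[G⁻] ⊗ ℂ[J,L] ⊗ ℂ[G⁺] as vector spaces). -/
noncomputable section

namespace BP

/-- The free `ℂ`-algebra on four generators `J, G⁺, G⁻, L`. -/
abbrev F : Type := FreeAlgebra ℂ (Fin 4)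

def jF : F := FreeAlgebra.ι ℂ 0
def gpF : F := FreeAlgebra.ι ℂ 1
def gmF : F := FreeAlgebra.ι ℂ 2
def lF : F := FreeAlgebra.ι ℂ 3

/-- `f_k(J, L) = 3J² − (k+3)L − (1/8)(k+1)(2k+3)·1`, as an element of the free algebra. -/
def fF (k : ℂ) : F :=
  3 * jF ^ 2 - algebraMap ℂ F (k + 3) * lF - algebraMap ℂ F (1/8 * (k + 1) * (2*k + 3))

/-- The defining relations of `A_k`: `L` is central, `[J,G⁺] = G⁺`, `[J,G⁻] = −G⁻`,
`[G⁺,G⁻] = f_k(J,L)`. -/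
inductive Rel (k : ℂ) : F → F → Prop
  | lj : Rel k (lF * jF) (jF * lF)
  | lgp : Rel k (lF * gpF) (gpF * lF)
  | lgm : Rel k (lF * gmF) (gmF * lF)
  | jgp : Rel k (jF * gpF - gpF * jF) gpF
  | jgm : Rel k (jF * gmF - gmF * jF) (-gmF)
  | gpgm : Rel k (gpF * gmF - gmF * gpF) (fF k)

/-- The unital associative `ℂ`-algebra `A_k`: the quotient of the free algebra on
`J, G⁺, G⁻, L` by the two-sided ideal generated by the defining relations. -/
def A (k : ℂ) : Type := RingQuot (Rel k)

instance (k : ℂ) : Ring (A k) := inferInstanceAs (Ring (RingQuot (Rel k)))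
instance (k : ℂ) : Algebra ℂ (A k) := inferInstanceAs (Algebra ℂ (RingQuot (Rel k)))

/-- The quotient map `F →ₐ[ℂ] A_k`. -/
def mk (k : ℂ) : F →ₐ[ℂ] A k := RingQuot.mkAlgHom ℂ (Rel k)

/-- The generator `J` of `A_k`. -/
def J (k : ℂ) : A k := mk k jF
/-- The generator `G⁺` of `A_k`. -/
def Gp (k : ℂ) : A k := mk k gpF
/-- The generator `G⁻` of `A_k`. -/
def Gm (k : ℂ) : A k := mk k gmF
/-- The generator `L` of `A_k`. -/
def L (k : ℂ) : A k := mk k lF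

/-! ### A polynomial representation of `A_k` -/

open MvPolynomial LinearMap

/-- The polynomial model: `ℂ[x₀,x₁,x₂,x₃]`. -/
abbrev V : Type := MvPolynomial (Fin 4) ℂ

/-- Partial derivative in the variable `x₀`. -/
def Pd : Module.End ℂ V := (pderiv (0 : Fin 4)).toLinearMap
/-- Multiplication by `x_i`. -/
def Ml (i : Fin 4) : Module.End ℂ V := LinearMap.mulLeft ℂ (X i)
/-- The substitution `x₁ ↦ x₁ - 1`. -/
def Sb : Module.End ℂ V := (aeval (fun i : Fin 4 => if i = 1 then X 1 - 1 else X i)).toLinearMap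

@[simp] lemma Ml_apply (i : Fin 4) (p : V) : Ml i p = X i * p := rfl
lemma Pd_mul (p q : V) : Pd (p * q) = Pd p * q + p * Pd q := pderiv_mul
lemma Sb_mul (p q : V) : Sb (p * q) = Sb p * Sb q := by simp [Sb]
@[simp] lemma Pd_X0 (p : V) : Pd (X 0 * p) = p + X 0 * Pd p := by
  rw [Pd_mul]; simp [Pd]
lemma Pd_Xne (i : Fin 4) (h : i ≠ 0) (p : V) : Pd (X i * p) = X i * Pd p := by
  rw [Pd_mul]; simp [Pd, pderiv_X, Pi.single_apply, h.symm]
@[simp] lemma Pd_X1 (p : V) : Pd (X 1 * p) = X 1 * Pd p := Pd_Xne 1 (by decide) p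
@[simp] lemma Pd_X2 (p : V) : Pd (X 2 * p) = X 2 * Pd p := Pd_Xne 2 (by decide) p
@[simp] lemma Pd_X3 (p : V) : Pd (X 3 * p) = X 3 * Pd p := Pd_Xne 3 (by decide) p
lemma Sb_X1 : Sb (X 1) = X 1 - 1 := by simp [Sb]
lemma Sb_Xne (i : Fin 4) (h : i ≠ 1) : Sb (X i) = X i := by simp [Sb, h]
@[simp] lemma Sb_X1mul (p : V) : Sb (X 1 * p) = (X 1 - 1) * Sb p := by rw [Sb_mul, Sb_X1]
@[simp] lemma Sb_X0mul (p : V) : Sb (X 0 * p) = X 0 * Sb p := by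
  rw [Sb_mul, Sb_Xne 0 (by decide)]
@[simp] lemma Sb_X2mul (p : V) : Sb (X 2 * p) = X 2 * Sb p := by
  rw [Sb_mul, Sb_Xne 2 (by decide)]
@[simp] lemma Sb_X3mul (p : V) : Sb (X 3 * p) = X 3 * Sb p := by
  rw [Sb_mul, Sb_Xne 3 (by decide)]
@[simp] lemma Pd_Sb (p : V) : Pd (Sb p) = Sb (Pd p) := by
  induction p using MvPolynomial.induction_on with
  | C a => simp [Sb, Pd]
  | add p q hp hq => simp only [map_add, hp, hq]
  | mul_X p i hp =>
    have hXi : Pd (Sb (X i)) = Sb (Pd (X i)) := by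
      fin_cases i <;> simp [Sb, Pd, pderiv_X, Pi.single_apply]
    rw [Sb_mul, Pd_mul, Pd_mul, map_add, Sb_mul, Sb_mul, hp, hXi]
@[simp] lemma Pd_Cmul (a : ℂ) (p : V) : Pd (C a * p) = C a * Pd p := by
  rw [Pd_mul]; simp [Pd]
@[simp] lemma Sb_Cmul (a : ℂ) (p : V) : Sb (C a * p) = C a * Sb p := by
  rw [Sb_mul]; simp [Sb]
@[simp] lemma Pd_smul (a : ℂ) (p : V) : Pd (a • p) = a • Pd p := map_smul _ _ _
@[simp] lemma Sb_smul (a : ℂ) (p : V) : Sb (a • p) = a • Sb p := map_smul _ _ _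
@[simp] lemma Pd_one : Pd (1 : V) = 0 := by simp [Pd]
@[simp] lemma Sb_one : Sb (1 : V) = 1 := by simp [Sb]

/-- The operator representing `J`. -/
def opJ : Module.End ℂ V := Ml 1 - Ml 0 * Pd
/-- The operator representing `G⁻`. -/
def opGm : Module.End ℂ V := Ml 0
/-- The operator representing `L`. -/
def opL : Module.End ℂ V := Ml 2
/-- The constant `(1/8)(k+1)(2k+3)`. -/
def ck (k : ℂ) : ℂ := 1/8 * (k + 1) * (2*k + 3)
/-- The lower-triangular part of the operator representing `G⁺`. -/
def Dk (k : ℂ) : Module.End ℂ V :=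
  (3:ℂ) • (Ml 1 * Ml 1 * Pd) - (3:ℂ) • (Ml 1 * Ml 0 * (Pd * Pd))
    + Ml 0 * Ml 0 * (Pd * Pd * Pd) + ((3:ℂ)/2) • (Ml 0 * (Pd * Pd))
    - (k+3) • (Ml 2 * Pd) - (ck k) • Pd
/-- The operator representing `G⁺`. -/
def opGp (k : ℂ) : Module.End ℂ V := Sb * Ml 3 + Dk k

set_option maxHeartbeats 1000000 in
lemma r_lj : opL * opJ = opJ * opL := by
  refine LinearMap.ext fun p => ?_
  simp only [opL, opJ, Dk, Module.End.mul_apply, LinearMap.sub_apply, LinearMap.add_apply, LinearMap.smul_apply, Ml_apply,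
    Pd_X0, Pd_X1, Pd_X2, Pd_X3, Sb_X0mul, Sb_X1mul, Sb_X2mul, Sb_X3mul, Pd_Sb,
    Pd_Cmul, Sb_Cmul, Pd_smul, Sb_smul, map_add, map_smul, map_sub]
  try simp only [smul_eq_C_mul]
  ring

set_option maxHeartbeats 1000000 in
lemma r_jgm : opJ * opGm - opGm * opJ = -opGm := by
  refine LinearMap.ext fun p => ?_
  simp only [opGm, opJ, Module.End.mul_apply, LinearMap.sub_apply, LinearMap.neg_apply, Ml_apply,
    Pd_X0, Pd_X1, Pd_X2, Pd_X3, map_add]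
  try simp only [smul_eq_C_mul]
  ring

set_option maxHeartbeats 1000000 in
lemma r_lgm : opL * opGm = opGm * opL := by
  refine LinearMap.ext fun p => ?_
  simp only [opL, opGm, Module.End.mul_apply, Ml_apply]
  ring

set_option maxHeartbeats 1000000 in
lemma r_lgp (k : ℂ) : opL * opGp k = opGp k * opL := by
  refine LinearMap.ext fun p => ?_
  simp only [opL, opGp, Dk, Module.End.mul_apply, LinearMap.sub_apply, LinearMap.add_apply, LinearMap.smul_apply, Ml_apply,
    Pd_X0, Pd_X1, Pd_X2, Pd_X3, Sb_X0mul, Sb_X1mul, Sb_X2mul, Sb_X3mul, Pd_Sb,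
    Pd_Cmul, Sb_Cmul, Pd_smul, Sb_smul, map_add, map_smul, map_sub]
  try simp only [smul_eq_C_mul]
  ring

set_option maxHeartbeats 1000000 in
lemma r_jgp (k : ℂ) : opJ * opGp k - opGp k * opJ = opGp k := by
  refine LinearMap.ext fun p => ?_
  simp only [opJ, opGp, Dk, Module.End.mul_apply, LinearMap.sub_apply, LinearMap.add_apply, LinearMap.smul_apply, Ml_apply,
    Pd_X0, Pd_X1, Pd_X2, Pd_X3, Sb_X0mul, Sb_X1mul, Sb_X2mul, Sb_X3mul, Pd_Sb,
    Pd_Cmul, Sb_Cmul, Pd_smul, Sb_smul, map_add, map_smul, map_sub, sub_mul, one_mul]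
  try simp only [smul_eq_C_mul]
  ring

set_option maxHeartbeats 1000000 in
lemma r_gpgm (k : ℂ) :
    opGp k * opGm - opGm * opGp k
      = 3 * (opJ * opJ) - algebraMap ℂ (Module.End ℂ V) (k + 3) * opL
        - algebraMap ℂ (Module.End ℂ V) (1/8 * (k + 1) * (2*k + 3)) := by
  refine LinearMap.ext fun p => ?_
  simp only [opJ, opGm, opL, opGp, Dk, Module.End.mul_apply, LinearMap.sub_apply, LinearMap.add_apply, LinearMap.smul_apply, Ml_apply,
    Pd_X0, Pd_X1, Pd_X2, Pd_X3, Sb_X0mul, Sb_X1mul, Sb_X2mul, Sb_X3mul, Pd_Sb,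
    Pd_Cmul, Sb_Cmul, Pd_smul, Sb_smul, map_add, map_smul, map_sub,
    Module.algebraMap_end_apply, Module.End.ofNat_apply, sub_mul, one_mul]
  simp only [ck, smul_eq_C_mul, map_add, map_mul, map_ofNat, Nat.cast_ofNat]
  have h32 : (C ((3:ℂ)/2) : V) * 2 = 3 := by
    rw [(map_ofNat (C : ℂ →+* V) 2).symm, ← map_mul, show (3:ℂ)/2*2 = 3 by norm_num]
    exact map_ofNat (C : ℂ →+* V) 3
  linear_combination (X (0:Fin 4) * Pd p) * h32

/-- The images of the four generators in `End V`. -/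
def gen (k : ℂ) : Fin 4 → Module.End ℂ V :=
  fun i => if i = 0 then opJ else if i = 1 then opGp k else if i = 2 then opGm else opL

@[simp] lemma gen0 (k : ℂ) : gen k 0 = opJ := rfl
@[simp] lemma gen1 (k : ℂ) : gen k 1 = opGp k := rfl
@[simp] lemma gen2 (k : ℂ) : gen k 2 = opGm := rfl
@[simp] lemma gen3 (k : ℂ) : gen k 3 = opL := rfl

/-- The representation on the level of the free algebra. -/
def liftF (k : ℂ) : F →ₐ[ℂ] Module.End ℂ V := FreeAlgebra.lift ℂ (gen k)

lemma liftF_rel (k : ℂ) : ∀ ⦃x y : F⦄, Rel k x y → liftF k x = liftF k y := by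
  intro x y h
  cases h with
  | lj =>
    simpa only [liftF, lF, jF, map_mul, FreeAlgebra.lift_ι_apply, gen0, gen3] using r_lj
  | lgp =>
    simpa only [liftF, lF, gpF, map_mul, FreeAlgebra.lift_ι_apply, gen1, gen3] using r_lgp k
  | lgm =>
    simpa only [liftF, lF, gmF, map_mul, FreeAlgebra.lift_ι_apply, gen2, gen3] using r_lgm
  | jgp =>
    simpa only [liftF, jF, gpF, map_mul, map_sub, FreeAlgebra.lift_ι_apply, gen0, gen1]
      using r_jgp k
  | jgm =>
    simpa only [liftF, jF, gmF, map_mul, map_sub, map_neg, FreeAlgebra.lift_ι_apply, gen0, gen2]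
      using r_jgm
  | gpgm =>
    have hh := r_gpgm k
    have e1 : liftF k gpF = opGp k := by simp [liftF, gpF]
    have e2 : liftF k gmF = opGm := by simp [liftF, gmF]
    have e3 : liftF k jF = opJ := by simp [liftF, jF]
    have e4 : liftF k lF = opL := by simp [liftF, lF]
    have e5 : liftF k (3 : F) = 3 := map_ofNat _ 3
    rw [map_sub, map_mul, map_mul, e1, e2, fF, map_sub, map_sub, map_mul, map_mul, map_pow,
      e3, e4, e5, AlgHom.commutes, AlgHom.commutes, pow_two]
    exact hh

/-- The representation `ρ : A_k → End(V)`. -/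
def rep (k : ℂ) : A k →ₐ[ℂ] Module.End ℂ V :=
  RingQuot.liftAlgHom ℂ ⟨liftF k, liftF_rel k⟩

lemma rep_mk (k : ℂ) (x : F) : rep k (mk k x) = liftF k x :=
  by apply RingQuot.liftAlgHom_mkAlgHom_apply

@[simp] lemma rep_J (k : ℂ) : rep k (J k) = opJ := by
  rw [J, rep_mk]; simp [liftF, jF]
@[simp] lemma rep_Gp (k : ℂ) : rep k (Gp k) = opGp k := by
  rw [Gp, rep_mk]; simp [liftF, gpF]
@[simp] lemma rep_Gm (k : ℂ) : rep k (Gm k) = opGm := by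
  rw [Gm, rep_mk]; simp [liftF, gmF]
@[simp] lemma rep_L (k : ℂ) : rep k (L k) = opL := by
  rw [L, rep_mk]; simp [liftF, lF]

/-- Evaluation of the representation at the constant polynomial `1`. -/
def ev (k : ℂ) : A k →ₗ[ℂ] V where
  toFun x := rep k x 1
  map_add' x y := by simp [map_add]
  map_smul' c x := by simp [map_smul]

lemma ev_apply (k : ℂ) (x : A k) : ev k x = rep k x 1 := rfl

lemma Pd_pow_ne (i : Fin 4) (h : i ≠ 0) (n : ℕ) : Pd (X i ^ n) = 0 := by
  induction n with
  | zero => simpa using Pd_one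
  | succ n ih => rw [pow_succ, mul_comm, Pd_Xne i h, ih, mul_zero]

lemma Sb_X3pow (n : ℕ) : Sb (X 3 ^ n) = X 3 ^ n := by
  induction n with
  | zero => simpa using Sb_one
  | succ n ih => rw [pow_succ, mul_comm, Sb_X3mul, ih]

lemma opGp_pow_one (k : ℂ) (d : ℕ) : (opGp k ^ d) 1 = X 3 ^ d := by
  induction d with
  | zero => simp
  | succ d ih =>
    rw [pow_succ', Module.End.mul_apply, ih]
    have h3 : Pd (X (3:Fin 4) ^ d) = 0 := Pd_pow_ne 3 (by decide) d
    simp only [opGp, Dk, LinearMap.add_apply, LinearMap.sub_apply, LinearMap.smul_apply, Module.End.mul_apply, Ml_apply, h3,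
      mul_zero, smul_zero, map_zero, zero_add, add_zero, sub_zero, zero_sub, neg_zero]
    rw [Sb_mul, Sb_Xne 3 (by decide), Sb_X3pow, pow_succ, mul_comm]

lemma opJ_pow (b : ℕ) : ∀ q : V, Pd q = 0 → (opJ ^ b) q = X 1 ^ b * q := by
  induction b with
  | zero => intro q _; simp
  | succ b ih =>
    intro q hq
    have h1 : opJ q = X 1 * q := by
      simp [opJ, LinearMap.sub_apply, Module.End.mul_apply, hq]
    have h2 : Pd (X 1 * q) = 0 := by rw [Pd_X1, hq, mul_zero]
    rw [pow_succ, Module.End.mul_apply, h1, ih _ h2, ← mul_assoc, ← pow_succ]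

lemma fam_eval (k : ℂ) (a b c d : ℕ) :
    ev k (Gm k ^ a * J k ^ b * L k ^ c * Gp k ^ d)
      = X 0 ^ a * (X 1 ^ b * (X 2 ^ c * X 3 ^ d)) := by
  rw [ev_apply]
  simp only [map_mul, map_pow, rep_J, rep_Gp, rep_Gm, rep_L, Module.End.mul_apply]
  rw [opGp_pow_one]
  have hL : (opL ^ c) (X 3 ^ d : V) = X 2 ^ c * X 3 ^ d := by
    rw [opL, Ml, LinearMap.pow_mulLeft]; rfl
  rw [hL]
  have hPd : Pd (X 2 ^ c * X 3 ^ d : V) = 0 := by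
    rw [Pd_mul, Pd_pow_ne 2 (by decide), Pd_pow_ne 3 (by decide), mul_zero, zero_mul, add_zero]
  rw [opJ_pow b _ hPd]
  rw [opGm, Ml, LinearMap.pow_mulLeft]; rfl

/-- The exponent multi-index of a PBW monomial. -/
def sfun (q : ℕ × ℕ × ℕ × ℕ) : Fin 4 →₀ ℕ :=
  Finsupp.single 0 q.1 + Finsupp.single 1 q.2.1 + Finsupp.single 2 q.2.2.1
    + Finsupp.single 3 q.2.2.2

lemma sfun_injective : Function.Injective sfun := by
  intro q q' h
  have h0 := DFunLike.congr_fun h 0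
  have h1 := DFunLike.congr_fun h 1
  have h2 := DFunLike.congr_fun h 2
  have h3 := DFunLike.congr_fun h 3
  simp only [sfun, Finsupp.add_apply, Finsupp.single_apply] at h0 h1 h2 h3
  simp at h0 h1 h2 h3
  exact Prod.ext h0 (Prod.ext h1 (Prod.ext h2 h3))

lemma pbw_linearIndependent (k : ℂ) :
    LinearIndependent ℂ
      (fun q : ℕ × ℕ × ℕ × ℕ => Gm k ^ q.1 * J k ^ q.2.1 * L k ^ q.2.2.1 * Gp k ^ q.2.2.2) := by
  apply LinearIndependent.of_comp (ev k)
  have hcomp : (ev k) ∘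
      (fun q : ℕ × ℕ × ℕ × ℕ => Gm k ^ q.1 * J k ^ q.2.1 * L k ^ q.2.2.1 * Gp k ^ q.2.2.2)
      = (fun s : Fin 4 →₀ ℕ => (monomial s (1:ℂ) : V)) ∘ sfun := by
    funext q
    simp only [Function.comp_apply, fam_eval, sfun]
    rw [X_pow_eq_monomial, X_pow_eq_monomial, X_pow_eq_monomial, X_pow_eq_monomial]
    simp only [monomial_mul, mul_one, one_mul]
    congr 1
    abel
  rw [hcomp, ← coe_basisMonomials]
  exact (basisMonomials (Fin 4) ℂ).linearIndependent.comp sfun sfun_injective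

/-! ### Spanning -/

lemma c_lj (k : ℂ) : L k * J k = J k * L k := by
  have h : mk k (lF * jF) = mk k (jF * lF) := RingQuot.mkAlgHom_rel ℂ (Rel.lj (k := k))
  rw [map_mul, map_mul] at h; exact h

lemma c_lgp (k : ℂ) : L k * Gp k = Gp k * L k := by
  have h : mk k (lF * gpF) = mk k (gpF * lF) := RingQuot.mkAlgHom_rel ℂ (Rel.lgp (k := k))
  rw [map_mul, map_mul] at h; exact h

lemma c_lgm (k : ℂ) : L k * Gm k = Gm k * L k := by
  have h : mk k (lF * gmF) = mk k (gmF * lF) := RingQuot.mkAlgHom_rel ℂ (Rel.lgm (k := k))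
  rw [map_mul, map_mul] at h; exact h

lemma c_jgp (k : ℂ) : J k * Gp k = Gp k * J k + Gp k := by
  have h : mk k (jF * gpF - gpF * jF) = mk k gpF := RingQuot.mkAlgHom_rel ℂ (Rel.jgp (k := k))
  have h' : J k * Gp k - Gp k * J k = Gp k := by simpa only [map_mul, map_sub, J, Gp] using h
  linear_combination (norm := noncomm_ring) h'

/-- The image of `f_k` in `A_k`. -/
def fA (k : ℂ) : A k := mk k (fF k)

lemma c_jgm (k : ℂ) : J k * Gm k = Gm k * J k - Gm k := by
  have h : mk k (jF * gmF - gmF * jF) = mk k (-gmF) := RingQuot.mkAlgHom_rel ℂ (Rel.jgm (k := k))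
  have h' : J k * Gm k - Gm k * J k = -(Gm k) := by
    simpa only [map_mul, map_sub, map_neg, J, Gm] using h
  linear_combination (norm := noncomm_ring) h'

lemma c_gpgm (k : ℂ) : Gp k * Gm k = Gm k * Gp k + fA k := by
  have h : mk k (gpF * gmF - gmF * gpF) = mk k (fF k) :=
    RingQuot.mkAlgHom_rel ℂ (Rel.gpgm (k := k))
  have h' : Gp k * Gm k - Gm k * Gp k = fA k := by simpa only [map_mul, map_sub, fA, Gp, Gm] using h
  linear_combination (norm := noncomm_ring) h'

lemma fA_eq (k : ℂ) :
    fA k = 3 * (J k * J k) - algebraMap ℂ (A k) (k + 3) * L k - algebraMap ℂ (A k) (ck k) := by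
  simp only [fA, fF, ck, map_mul, map_sub, map_add, map_pow, map_ofNat, AlgHom.commutes, pow_two]
  rfl

/-- The PBW family. -/
def fam (k : ℂ) : ℕ × ℕ × ℕ × ℕ → A k :=
  fun q => Gm k ^ q.1 * J k ^ q.2.1 * L k ^ q.2.2.1 * Gp k ^ q.2.2.2

/-- The span of the PBW monomials. -/
def Sp (k : ℂ) : Submodule ℂ (A k) := Submodule.span ℂ (Set.range (fam k))

lemma fam_mem (k : ℂ) (a b c d : ℕ) :
    Gm k ^ a * J k ^ b * L k ^ c * Gp k ^ d ∈ Sp k :=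
  Submodule.subset_span ⟨(a, b, c, d), rfl⟩

lemma J_Gm_pow (k : ℂ) (a : ℕ) :
    J k * Gm k ^ a = Gm k ^ a * J k - (a : ℂ) • Gm k ^ a := by
  induction a with
  | zero => simp
  | succ a ih =>
    rw [pow_succ, ← mul_assoc, ih, sub_mul, smul_mul_assoc, mul_assoc, c_jgm, Nat.cast_succ,
      add_smul, one_smul, mul_sub, ← mul_assoc, ← pow_succ]
    abel

lemma L_Gm_pow (k : ℂ) (a : ℕ) : L k * Gm k ^ a = Gm k ^ a * L k :=
  (Commute.pow_right (c_lgm k) a).eq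

lemma L_J_pow (k : ℂ) (b : ℕ) : L k * J k ^ b = J k ^ b * L k :=
  (Commute.pow_right (c_lj k) b).eq

lemma Gp_L_pow (k : ℂ) (c : ℕ) : Gp k * L k ^ c = L k ^ c * Gp k :=
  (Commute.pow_right (c_lgp k).symm c).eq

lemma J_mul_fam (k : ℂ) (a b c d : ℕ) :
    J k * (Gm k ^ a * J k ^ b * L k ^ c * Gp k ^ d) ∈ Sp k := by
  have h : J k * (Gm k ^ a * J k ^ b * L k ^ c * Gp k ^ d)
      = Gm k ^ a * J k ^ (b+1) * L k ^ c * Gp k ^ d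
        - (a : ℂ) • (Gm k ^ a * J k ^ b * L k ^ c * Gp k ^ d) := by
    have := J_Gm_pow k a
    calc J k * (Gm k ^ a * J k ^ b * L k ^ c * Gp k ^ d)
        = (J k * Gm k ^ a) * J k ^ b * L k ^ c * Gp k ^ d := by noncomm_ring
      _ = (Gm k ^ a * J k - (a : ℂ) • Gm k ^ a) * J k ^ b * L k ^ c * Gp k ^ d := by rw [this]
      _ = Gm k ^ a * (J k * J k ^ b) * L k ^ c * Gp k ^ d
            - (a : ℂ) • (Gm k ^ a * J k ^ b * L k ^ c * Gp k ^ d) := by noncomm_ring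
      _ = _ := by rw [← pow_succ']
  rw [h]
  exact Submodule.sub_mem _ (fam_mem k a (b+1) c d)
    (Submodule.smul_mem _ _ (fam_mem k a b c d))

lemma L_mul_fam (k : ℂ) (a b c d : ℕ) :
    L k * (Gm k ^ a * J k ^ b * L k ^ c * Gp k ^ d) ∈ Sp k := by
  have h : L k * (Gm k ^ a * J k ^ b * L k ^ c * Gp k ^ d)
      = Gm k ^ a * J k ^ b * L k ^ (c+1) * Gp k ^ d := by
    calc L k * (Gm k ^ a * J k ^ b * L k ^ c * Gp k ^ d)
        = (L k * Gm k ^ a) * J k ^ b * L k ^ c * Gp k ^ d := by noncomm_ring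
      _ = Gm k ^ a * (L k * J k ^ b) * L k ^ c * Gp k ^ d := by rw [L_Gm_pow]; noncomm_ring
      _ = Gm k ^ a * J k ^ b * (L k * L k ^ c) * Gp k ^ d := by rw [L_J_pow]; noncomm_ring
      _ = _ := by rw [← pow_succ']
  rw [h]; exact fam_mem k a b (c+1) d

lemma Gm_mul_fam (k : ℂ) (a b c d : ℕ) :
    Gm k * (Gm k ^ a * J k ^ b * L k ^ c * Gp k ^ d) ∈ Sp k := by
  have h : Gm k * (Gm k ^ a * J k ^ b * L k ^ c * Gp k ^ d)
      = Gm k ^ (a+1) * J k ^ b * L k ^ c * Gp k ^ d := by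
    rw [pow_succ']; noncomm_ring
  rw [h]; exact fam_mem k (a+1) b c d

lemma J_mul_mem (k : ℂ) {x : A k} (hx : x ∈ Sp k) : J k * x ∈ Sp k := by
  induction hx using Submodule.span_induction with
  | mem x hx =>
    obtain ⟨⟨a, b, c, d⟩, rfl⟩ := hx
    exact J_mul_fam k a b c d
  | zero => simpa using Submodule.zero_mem (Sp k)
  | add x y _ _ hx hy => rw [mul_add]; exact Submodule.add_mem _ hx hy
  | smul t x _ hx => rw [mul_smul_comm]; exact Submodule.smul_mem _ _ hx

lemma L_mul_mem (k : ℂ) {x : A k} (hx : x ∈ Sp k) : L k * x ∈ Sp k := by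
  induction hx using Submodule.span_induction with
  | mem x hx =>
    obtain ⟨⟨a, b, c, d⟩, rfl⟩ := hx
    exact L_mul_fam k a b c d
  | zero => simpa using Submodule.zero_mem (Sp k)
  | add x y _ _ hx hy => rw [mul_add]; exact Submodule.add_mem _ hx hy
  | smul t x _ hx => rw [mul_smul_comm]; exact Submodule.smul_mem _ _ hx

lemma Gm_mul_mem (k : ℂ) {x : A k} (hx : x ∈ Sp k) : Gm k * x ∈ Sp k := by
  induction hx using Submodule.span_induction with
  | mem x hx =>
    obtain ⟨⟨a, b, c, d⟩, rfl⟩ := hx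
    exact Gm_mul_fam k a b c d
  | zero => simpa using Submodule.zero_mem (Sp k)
  | add x y _ _ hx hy => rw [mul_add]; exact Submodule.add_mem _ hx hy
  | smul t x _ hx => rw [mul_smul_comm]; exact Submodule.smul_mem _ _ hx

lemma fA_mul_mem (k : ℂ) {x : A k} (hx : x ∈ Sp k) : fA k * x ∈ Sp k := by
  rw [fA_eq]
  have h : (3 * (J k * J k) - algebraMap ℂ (A k) (k + 3) * L k - algebraMap ℂ (A k) (ck k)) * x
      = (3:ℂ) • (J k * (J k * x)) - (k+3) • (L k * x) - (ck k) • x := by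
    calc (3 * (J k * J k) - algebraMap ℂ (A k) (k + 3) * L k - algebraMap ℂ (A k) (ck k)) * x
        = algebraMap ℂ (A k) 3 * (J k * (J k * x)) - algebraMap ℂ (A k) (k + 3) * (L k * x)
            - algebraMap ℂ (A k) (ck k) * x := by
          rw [map_ofNat]; noncomm_ring
      _ = (3:ℂ) • (J k * (J k * x)) - (k+3) • (L k * x) - (ck k) • x := by
          rw [← Algebra.smul_def, ← Algebra.smul_def, ← Algebra.smul_def]
  rw [h]
  exact Submodule.sub_mem _
    (Submodule.sub_mem _ (Submodule.smul_mem _ _ (J_mul_mem k (J_mul_mem k hx)))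
      (Submodule.smul_mem _ _ (L_mul_mem k hx)))
    (Submodule.smul_mem _ _ hx)

lemma Gp_mul_fam (k : ℂ) (a : ℕ) : ∀ b c d : ℕ,
    Gp k * (Gm k ^ a * J k ^ b * L k ^ c * Gp k ^ d) ∈ Sp k := by
  induction a with
  | zero =>
    intro b c d
    induction b with
    | zero =>
      have h : Gp k * (Gm k ^ 0 * J k ^ 0 * L k ^ c * Gp k ^ d)
          = Gm k ^ 0 * J k ^ 0 * L k ^ c * Gp k ^ (d+1) := by
        simp only [pow_zero, one_mul, mul_one]
        rw [← mul_assoc, Gp_L_pow, mul_assoc, ← pow_succ']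
      rw [h]; exact fam_mem k 0 0 c (d+1)
    | succ b ih =>
      have h : Gp k * (Gm k ^ 0 * J k ^ (b+1) * L k ^ c * Gp k ^ d)
          = J k * (Gp k * (Gm k ^ 0 * J k ^ b * L k ^ c * Gp k ^ d))
            - Gp k * (Gm k ^ 0 * J k ^ b * L k ^ c * Gp k ^ d) := by
        simp only [pow_zero, one_mul]
        rw [pow_succ']
        have := c_jgp k
        calc Gp k * (J k * J k ^ b * L k ^ c * Gp k ^ d)
            = (Gp k * J k) * (J k ^ b * L k ^ c * Gp k ^ d) := by noncomm_ring
          _ = (J k * Gp k - Gp k) * (J k ^ b * L k ^ c * Gp k ^ d) := by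
              rw [eq_sub_of_add_eq (c_jgp k).symm]
          _ = _ := by noncomm_ring
      rw [h]
      exact Submodule.sub_mem _ (J_mul_mem k ih) ih
  | succ a ih =>
    intro b c d
    have h : Gp k * (Gm k ^ (a+1) * J k ^ b * L k ^ c * Gp k ^ d)
        = Gm k * (Gp k * (Gm k ^ a * J k ^ b * L k ^ c * Gp k ^ d))
          + fA k * (Gm k ^ a * J k ^ b * L k ^ c * Gp k ^ d) := by
      rw [pow_succ']
      calc Gp k * (Gm k * Gm k ^ a * J k ^ b * L k ^ c * Gp k ^ d)
          = (Gp k * Gm k) * (Gm k ^ a * J k ^ b * L k ^ c * Gp k ^ d) := by noncomm_ring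
        _ = (Gm k * Gp k + fA k) * (Gm k ^ a * J k ^ b * L k ^ c * Gp k ^ d) := by
            rw [c_gpgm]
        _ = _ := by noncomm_ring
    rw [h]
    exact Submodule.add_mem _ (Gm_mul_mem k (ih b c d)) (fA_mul_mem k (fam_mem k a b c d))

lemma Gp_mul_mem (k : ℂ) {x : A k} (hx : x ∈ Sp k) : Gp k * x ∈ Sp k := by
  induction hx using Submodule.span_induction with
  | mem x hx =>
    obtain ⟨⟨a, b, c, d⟩, rfl⟩ := hx
    exact Gp_mul_fam k a b c d
  | zero => simpa using Submodule.zero_mem (Sp k)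
  | add x y _ _ hx hy => rw [mul_add]; exact Submodule.add_mem _ hx hy
  | smul t x _ hx => rw [mul_smul_comm]; exact Submodule.smul_mem _ _ hx

lemma one_mem_Sp (k : ℂ) : (1 : A k) ∈ Sp k := by
  have h := fam_mem k 0 0 0 0
  simpa using h

lemma mk_mul_mem (k : ℂ) (p : F) : ∀ x ∈ Sp k, mk k p * x ∈ Sp k := by
  induction p using FreeAlgebra.induction with
  | grade0 r =>
    intro x hx
    rw [AlgHom.commutes, ← Algebra.smul_def]
    exact Submodule.smul_mem _ _ hx
  | grade1 i =>
    intro x hx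
    fin_cases i
    · exact J_mul_mem k hx
    · exact Gp_mul_mem k hx
    · exact Gm_mul_mem k hx
    · exact L_mul_mem k hx
  | mul p q hp hq =>
    intro x hx
    rw [map_mul, mul_assoc]
    exact hp _ (hq _ hx)
  | add p q hp hq =>
    intro x hx
    rw [map_add, add_mul]
    exact Submodule.add_mem _ (hp _ hx) (hq _ hx)

lemma Sp_eq_top (k : ℂ) : Sp k = ⊤ := by
  rw [Submodule.eq_top_iff']
  intro x
  obtain ⟨p, rfl⟩ := RingQuot.mkAlgHom_surjective ℂ (Rel k) x
  have h := mk_mul_mem k p 1 (one_mem_Sp k)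
  rw [mul_one] at h; exact h

/-- **PBW basis for `A_k`** (Statement 0): the monomials `(G⁻)^a J^b L^c (G⁺)^d`,
for `a, b, c, d ∈ ℕ`, form a basis of `A_k` as a `ℂ`-vector space. -/
theorem pbw_basis (k : ℂ) :
    LinearIndependent ℂ
      (fun q : ℕ × ℕ × ℕ × ℕ => Gm k ^ q.1 * J k ^ q.2.1 * L k ^ q.2.2.1 * Gp k ^ q.2.2.2) ∧
    Submodule.span ℂ
      (Set.range
        (fun q : ℕ × ℕ × ℕ × ℕ => Gm k ^ q.1 * J k ^ q.2.1 * L k ^ q.2.2.1 * Gp k ^ q.2.2.2))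
      = (⊤ : Submodule ℂ (A k)) := by
  constructor
  · exact pbw_linearIndependent k
  · exact Sp_eq_top k

end BP
end
end

section
/- If ω ≠ ω⁺_{i,Δ} for every i ∈ j + ℤ, then the A_k-modules R_{j,Δ,ω} and R_{j+1,Δ,ω} are isomorphic (so the isomorphism class of the simple dense module depends only on the coset j + ℤ). -/
noncomputable section

namespace BP

/-- The central element `Ω = G⁺G⁻ + G⁻G⁺ + 2J³ + J − 2J((k+3)L + (1/8)(k+1)(2k+3)·1)`. -/
def Omega (k : ℂ) : A k :=
  Gp k * Gm k + Gm k * Gp k + 2 * J k ^ 3 + J k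
    - 2 * J k * (algebraMap ℂ (A k) (k + 3) * L k
        + algebraMap ℂ (A k) (1/8 * (k + 1) * (2*k + 3)))

/-- The left ideal of `A_k` by which one quotients to obtain the induced module
`R_{j,Δ,ω} = A_k ⊗_{C_k} ℂ_{j,Δ,ω}`: it is generated by `J − j·1`, `L − Δ·1` and
`Ω − ω·1`. -/
def denseIdeal (k j Δ ω : ℂ) : Submodule (A k) (A k) :=
  Submodule.span (A k)
    {J k - algebraMap ℂ (A k) j, L k - algebraMap ℂ (A k) Δ,
      Omega k - algebraMap ℂ (A k) ω}

/-- The induced module `R_{j,Δ,ω} = A_k ⊗_{C_k} ℂ_{j,Δ,ω}`, realised as the quotient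
`A_k / A_k·(J−j, L−Δ, Ω−ω)`. -/
abbrev Rmod (k j Δ ω : ℂ) : Type := A k ⧸ denseIdeal k j Δ ω

/-- The generating vector `v = 1 ⊗ 1` of `R_{j,Δ,ω}`. -/
def rv (k j Δ ω : ℂ) : Rmod k j Δ ω := Submodule.Quotient.mk (1 : A k)

/-- `ω⁺_{j,Δ} = (2j+1)(j(j+1) − (k+3)Δ − (1/8)(k+1)(2k+3))`. -/
def omegaP (k j Δ : ℂ) : ℂ :=
  (2*j + 1) * (j*(j + 1) - (k + 3)*Δ - 1/8 * (k + 1) * (2*k + 3))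

/-- `ω⁻_{j,Δ} = (2j−1)(j(j−1) − (k+3)Δ − (1/8)(k+1)(2k+3))`. -/
def omegaM (k j Δ : ℂ) : ℂ :=
  (2*j - 1) * (j*(j - 1) - (k + 3)*Δ - 1/8 * (k + 1) * (2*k + 3))


variable {k : ℂ}

def Ek (k : ℂ) : A k :=
  algebraMap ℂ (A k) (k+3) * L k + algebraMap ℂ (A k) (1/8 * (k + 1) * (2*k + 3))

def Fk (k : ℂ) : A k := 3 * J k ^ 2 - Ek k

lemma C_mk (r : ℂ) : mk k (algebraMap ℂ F r) = algebraMap ℂ (A k) r := (mk k).commutes r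

lemma mkj : mk k jF = J k := rfl
lemma mkl : mk k lF = L k := rfl
lemma mkgp : mk k gpF = Gp k := rfl
lemma mkgm : mk k gmF = Gm k := rfl

lemma mk_fF : mk k (fF k) = Fk k := by
  simp only [fF, Fk, Ek, map_sub, map_mul, map_pow, map_ofNat, C_mk, mkj, mkl]
  rw [← map_mul, ← map_mul]
  noncomm_ring


lemma L_J : L k * J k = J k * L k := by
  have h : mk k (lF * jF) = mk k (jF * lF) := RingQuot.mkAlgHom_rel ℂ Rel.lj
  rw [map_mul, map_mul, mkj, mkl] at h
  exact h

lemma L_Gp : L k * Gp k = Gp k * L k := by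
  have h : mk k (lF * gpF) = mk k (gpF * lF) := RingQuot.mkAlgHom_rel ℂ Rel.lgp
  rw [map_mul, map_mul, mkgp, mkl] at h
  exact h

lemma L_Gm : L k * Gm k = Gm k * L k := by
  have h : mk k (lF * gmF) = mk k (gmF * lF) := RingQuot.mkAlgHom_rel ℂ Rel.lgm
  rw [map_mul, map_mul, mkgm, mkl] at h
  exact h

lemma J_Gp : J k * Gp k = Gp k * J k + Gp k := by
  have h : mk k (jF * gpF - gpF * jF) = mk k gpF := RingQuot.mkAlgHom_rel ℂ Rel.jgp
  rw [map_sub, map_mul, map_mul, mkgp, mkj] at h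
  rw [sub_eq_iff_eq_add.mp h]; abel

lemma J_Gm : J k * Gm k = Gm k * J k - Gm k := by
  have h : mk k (jF * gmF - gmF * jF) = mk k (-gmF) := RingQuot.mkAlgHom_rel ℂ Rel.jgm
  rw [map_sub, map_mul, map_mul, map_neg, mkgm, mkj] at h
  rw [sub_eq_iff_eq_add.mp h]; abel

lemma Gp_Gm : Gp k * Gm k = Gm k * Gp k + Fk k := by
  have h : mk k (gpF * gmF - gmF * gpF) = mk k (fF k) := RingQuot.mkAlgHom_rel ℂ Rel.gpgm
  rw [map_sub, map_mul, map_mul, mkgp, mkgm, mk_fF] at h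
  rw [sub_eq_iff_eq_add.mp h]; abel


lemma C_comm (r : ℂ) (x : A k) :
    algebraMap ℂ (A k) r * x = x * algebraMap ℂ (A k) r := Algebra.commutes r x

lemma E_comm {x : A k} (hx : L k * x = x * L k) : Ek k * x = x * Ek k := by
  unfold Ek
  calc (algebraMap ℂ (A k) (k+3) * L k + algebraMap ℂ (A k) (1/8*(k+1)*(2*k+3))) * x
      = algebraMap ℂ (A k) (k+3) * (L k * x) + algebraMap ℂ (A k) (1/8*(k+1)*(2*k+3)) * x := by
        noncomm_ring
    _ = algebraMap ℂ (A k) (k+3) * (x * L k) + x * algebraMap ℂ (A k) (1/8*(k+1)*(2*k+3)) := by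
        rw [hx, C_comm (1/8*(k+1)*(2*k+3)) x]
    _ = (algebraMap ℂ (A k) (k+3) * x) * L k + x * algebraMap ℂ (A k) (1/8*(k+1)*(2*k+3)) := by
        noncomm_ring
    _ = (x * algebraMap ℂ (A k) (k+3)) * L k + x * algebraMap ℂ (A k) (1/8*(k+1)*(2*k+3)) := by
        rw [C_comm (k+3) x]
    _ = x * (algebraMap ℂ (A k) (k+3) * L k + algebraMap ℂ (A k) (1/8*(k+1)*(2*k+3))) := by
        noncomm_ring

lemma E_Gp : Ek k * Gp k = Gp k * Ek k := E_comm L_Gp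
lemma E_Gm : Ek k * Gm k = Gm k * Ek k := E_comm L_Gm
lemma E_J : Ek k * J k = J k * Ek k := E_comm L_J

lemma OmegaE : Omega k = Gp k * Gm k + Gm k * Gp k + 2 * J k ^ 3 + J k - 2 * (J k * Ek k) := by
  unfold Omega Ek
  noncomm_ring


lemma Gm_Gp : Gm k * Gp k = Gp k * Gm k - Fk k := by rw [Gp_Gm]; abel

lemma J2_Gp : J k ^ 2 * Gp k = Gp k * (J k ^ 2 + 2 * J k + 1) := by
  calc J k ^ 2 * Gp k = J k * (J k * Gp k) := by noncomm_ring
    _ = J k * (Gp k * J k + Gp k) := by rw [J_Gp]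
    _ = (J k * Gp k) * J k + J k * Gp k := by noncomm_ring
    _ = (Gp k * J k + Gp k) * J k + (Gp k * J k + Gp k) := by rw [J_Gp]
    _ = Gp k * (J k ^ 2 + 2 * J k + 1) := by noncomm_ring

lemma J3_Gp : J k ^ 3 * Gp k = Gp k * (J k ^ 3 + 3 * J k ^ 2 + 3 * J k + 1) := by
  calc J k ^ 3 * Gp k = J k * (J k ^ 2 * Gp k) := by noncomm_ring
    _ = J k * (Gp k * (J k ^ 2 + 2 * J k + 1)) := by rw [J2_Gp]
    _ = (J k * Gp k) * (J k ^ 2 + 2 * J k + 1) := by noncomm_ring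
    _ = (Gp k * J k + Gp k) * (J k ^ 2 + 2 * J k + 1) := by rw [J_Gp]
    _ = Gp k * (J k ^ 3 + 3 * J k ^ 2 + 3 * J k + 1) := by noncomm_ring

lemma F_Gp : Fk k * Gp k = Gp k * (Fk k + 6 * J k + 3) := by
  calc Fk k * Gp k = 3 * (J k ^ 2 * Gp k) - Ek k * Gp k := by unfold Fk; noncomm_ring
    _ = 3 * (Gp k * (J k ^ 2 + 2 * J k + 1)) - Gp k * Ek k := by rw [J2_Gp, E_Gp]
    _ = Gp k * (Fk k + 6 * J k + 3) := by unfold Fk; noncomm_ring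

lemma omega_Gp : Omega k * Gp k = Gp k * Omega k := by
  calc Omega k * Gp k
      = (Gp k * Gm k + Gm k * Gp k + 2 * J k ^ 3 + J k - 2 * (J k * Ek k)) * Gp k := by
        rw [OmegaE]
    _ = Gp k * (Gm k * Gp k) + (Gm k * Gp k) * Gp k + 2 * (J k ^ 3 * Gp k) + (J k * Gp k)
        - 2 * (J k * (Ek k * Gp k)) := by noncomm_ring
    _ = Gp k * (Gm k * Gp k) + (Gm k * Gp k) * Gp k + 2 * (J k ^ 3 * Gp k) + (J k * Gp k)
        - 2 * (J k * (Gp k * Ek k)) := by rw [E_Gp]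
    _ = Gp k * (Gm k * Gp k) + (Gm k * Gp k) * Gp k + 2 * (J k ^ 3 * Gp k) + (J k * Gp k)
        - 2 * ((J k * Gp k) * Ek k) := by noncomm_ring
    _ = Gp k * (Gp k * Gm k - Fk k) + ((Gp k * Gm k - Fk k) * Gp k)
        + 2 * (Gp k * (J k ^ 3 + 3 * J k ^ 2 + 3 * J k + 1)) + (Gp k * J k + Gp k)
        - 2 * ((Gp k * J k + Gp k) * Ek k) := by rw [Gm_Gp, J3_Gp, J_Gp]
    _ = Gp k * (Gp k * Gm k) - Gp k * Fk k + Gp k * (Gm k * Gp k) - Fk k * Gp k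
        + 2 * (Gp k * (J k ^ 3 + 3 * J k ^ 2 + 3 * J k + 1)) + (Gp k * J k + Gp k)
        - 2 * ((Gp k * J k + Gp k) * Ek k) := by noncomm_ring
    _ = Gp k * (Gp k * Gm k) - Gp k * Fk k + Gp k * (Gp k * Gm k - Fk k)
        - Gp k * (Fk k + 6 * J k + 3)
        + 2 * (Gp k * (J k ^ 3 + 3 * J k ^ 2 + 3 * J k + 1)) + (Gp k * J k + Gp k)
        - 2 * ((Gp k * J k + Gp k) * Ek k) := by rw [Gm_Gp, F_Gp]
    _ = Gp k * (Gp k * Gm k + (Gp k * Gm k - Fk k) + 2 * J k ^ 3 + J k - 2 * (J k * Ek k)) := by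
        simp only [Fk]; noncomm_ring
    _ = Gp k * (Gp k * Gm k + Gm k * Gp k + 2 * J k ^ 3 + J k - 2 * (J k * Ek k)) := by
        rw [Gm_Gp]
    _ = Gp k * Omega k := by rw [OmegaE]


lemma J2_Gm : J k ^ 2 * Gm k = Gm k * (J k ^ 2 - 2 * J k + 1) := by
  calc J k ^ 2 * Gm k = J k * (J k * Gm k) := by noncomm_ring
    _ = J k * (Gm k * J k - Gm k) := by rw [J_Gm]
    _ = (J k * Gm k) * J k - J k * Gm k := by noncomm_ring
    _ = (Gm k * J k - Gm k) * J k - (Gm k * J k - Gm k) := by rw [J_Gm]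
    _ = Gm k * (J k ^ 2 - 2 * J k + 1) := by noncomm_ring

lemma J3_Gm : J k ^ 3 * Gm k = Gm k * (J k ^ 3 - 3 * J k ^ 2 + 3 * J k - 1) := by
  calc J k ^ 3 * Gm k = J k * (J k ^ 2 * Gm k) := by noncomm_ring
    _ = J k * (Gm k * (J k ^ 2 - 2 * J k + 1)) := by rw [J2_Gm]
    _ = (J k * Gm k) * (J k ^ 2 - 2 * J k + 1) := by noncomm_ring
    _ = (Gm k * J k - Gm k) * (J k ^ 2 - 2 * J k + 1) := by rw [J_Gm]
    _ = Gm k * (J k ^ 3 - 3 * J k ^ 2 + 3 * J k - 1) := by noncomm_ring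

lemma F_Gm : Fk k * Gm k = Gm k * (Fk k - 6 * J k + 3) := by
  calc Fk k * Gm k = 3 * (J k ^ 2 * Gm k) - Ek k * Gm k := by unfold Fk; noncomm_ring
    _ = 3 * (Gm k * (J k ^ 2 - 2 * J k + 1)) - Gm k * Ek k := by rw [J2_Gm, E_Gm]
    _ = Gm k * (Fk k - 6 * J k + 3) := by unfold Fk; noncomm_ring

lemma omega_Gm : Omega k * Gm k = Gm k * Omega k := by
  calc Omega k * Gm k
      = (Gp k * Gm k + Gm k * Gp k + 2 * J k ^ 3 + J k - 2 * (J k * Ek k)) * Gm k := by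
        rw [OmegaE]
    _ = (Gp k * Gm k) * Gm k + Gm k * (Gp k * Gm k) + 2 * (J k ^ 3 * Gm k) + (J k * Gm k)
        - 2 * (J k * (Ek k * Gm k)) := by noncomm_ring
    _ = (Gp k * Gm k) * Gm k + Gm k * (Gp k * Gm k) + 2 * (J k ^ 3 * Gm k) + (J k * Gm k)
        - 2 * (J k * (Gm k * Ek k)) := by rw [E_Gm]
    _ = (Gp k * Gm k) * Gm k + Gm k * (Gp k * Gm k) + 2 * (J k ^ 3 * Gm k) + (J k * Gm k)
        - 2 * ((J k * Gm k) * Ek k) := by noncomm_ring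
    _ = (Gm k * Gp k + Fk k) * Gm k + Gm k * (Gm k * Gp k + Fk k)
        + 2 * (Gm k * (J k ^ 3 - 3 * J k ^ 2 + 3 * J k - 1)) + (Gm k * J k - Gm k)
        - 2 * ((Gm k * J k - Gm k) * Ek k) := by rw [Gp_Gm, J3_Gm, J_Gm]
    _ = Gm k * (Gp k * Gm k) + Fk k * Gm k + Gm k * (Gm k * Gp k) + Gm k * Fk k
        + 2 * (Gm k * (J k ^ 3 - 3 * J k ^ 2 + 3 * J k - 1)) + (Gm k * J k - Gm k)
        - 2 * ((Gm k * J k - Gm k) * Ek k) := by noncomm_ring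
    _ = Gm k * (Gm k * Gp k + Fk k) + Gm k * (Fk k - 6 * J k + 3) + Gm k * (Gm k * Gp k)
        + Gm k * Fk k
        + 2 * (Gm k * (J k ^ 3 - 3 * J k ^ 2 + 3 * J k - 1)) + (Gm k * J k - Gm k)
        - 2 * ((Gm k * J k - Gm k) * Ek k) := by rw [Gp_Gm, F_Gm]
    _ = Gm k * ((Gm k * Gp k + Fk k) + Gm k * Gp k + 2 * J k ^ 3 + J k - 2 * (J k * Ek k)) := by
        simp only [Fk]; noncomm_ring
    _ = Gm k * (Gp k * Gm k + Gm k * Gp k + 2 * J k ^ 3 + J k - 2 * (J k * Ek k)) := by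
        rw [Gp_Gm]
    _ = Gm k * Omega k := by rw [OmegaE]

lemma twoGmGp : 2 * (Gm k * Gp k)
    = Omega k - Fk k - 2 * J k ^ 3 - J k + 2 * (J k * Ek k) := by
  rw [OmegaE, Gp_Gm]; noncomm_ring

lemma twoGpGm : 2 * (Gp k * Gm k)
    = Omega k + Fk k - 2 * J k ^ 3 - J k + 2 * (J k * Ek k) := by
  rw [OmegaE, Gp_Gm]; noncomm_ring


section Reduction

variable (k j Δ ω : ℂ)

lemma mem_g1 : J k - algebraMap ℂ (A k) j ∈ denseIdeal k j Δ ω :=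
  Submodule.subset_span (by simp [denseIdeal])

lemma mem_g2 : L k - algebraMap ℂ (A k) Δ ∈ denseIdeal k j Δ ω :=
  Submodule.subset_span (by simp)

lemma mem_g3 : Omega k - algebraMap ℂ (A k) ω ∈ denseIdeal k j Δ ω :=
  Submodule.subset_span (by simp)

lemma mem_mul_left (x : A k) {y : A k} (hy : y ∈ denseIdeal k j Δ ω) :
    x * y ∈ denseIdeal k j Δ ω := by
  simpa [smul_eq_mul] using (denseIdeal k j Δ ω).smul_mem x hy

lemma qeq {a b : A k} (hab : a - b ∈ denseIdeal k j Δ ω) :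
    (denseIdeal k j Δ ω).mkQ a = (denseIdeal k j Δ ω).mkQ b := by
  simp only [Submodule.mkQ_apply]
  exact (Submodule.Quotient.eq _).2 hab

lemma qmul (x : A k) {a b : A k}
    (hab : (denseIdeal k j Δ ω).mkQ a = (denseIdeal k j Δ ω).mkQ b) :
    (denseIdeal k j Δ ω).mkQ (x * a) = (denseIdeal k j Δ ω).mkQ (x * b) := by
  apply qeq
  have h1 : a - b ∈ denseIdeal k j Δ ω :=
    (Submodule.Quotient.eq _).1 (by simpa [Submodule.mkQ_apply] using hab)
  have h2 : x * a - x * b = x * (a - b) := by noncomm_ring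
  rw [h2]; exact mem_mul_left k j Δ ω x h1

lemma qJ : (denseIdeal k j Δ ω).mkQ (J k) = (denseIdeal k j Δ ω).mkQ (algebraMap ℂ (A k) j) :=
  qeq k j Δ ω (mem_g1 k j Δ ω)

lemma qL : (denseIdeal k j Δ ω).mkQ (L k) = (denseIdeal k j Δ ω).mkQ (algebraMap ℂ (A k) Δ) :=
  qeq k j Δ ω (mem_g2 k j Δ ω)

lemma qOm : (denseIdeal k j Δ ω).mkQ (Omega k)
    = (denseIdeal k j Δ ω).mkQ (algebraMap ℂ (A k) ω) :=
  qeq k j Δ ω (mem_g3 k j Δ ω)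

end Reduction


section Values

variable (k j Δ ω : ℂ)

/-- scalar value of `E` -/
def e0 (k Δ : ℂ) : ℂ := (k+3)*Δ + 1/8*(k+1)*(2*k+3)

lemma qE : (denseIdeal k j Δ ω).mkQ (Ek k)
    = (denseIdeal k j Δ ω).mkQ (algebraMap ℂ (A k) (e0 k Δ)) := by
  apply qeq
  have hsplit : algebraMap ℂ (A k) (e0 k Δ)
      = algebraMap ℂ (A k) (k+3) * algebraMap ℂ (A k) Δ
        + algebraMap ℂ (A k) (1/8*(k+1)*(2*k+3)) := by
    rw [e0, map_add, map_mul]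
  have hm : Ek k - algebraMap ℂ (A k) (e0 k Δ)
      = algebraMap ℂ (A k) (k+3) * (L k - algebraMap ℂ (A k) Δ) := by
    rw [Ek, hsplit]
    noncomm_ring
  rw [hm]
  exact mem_mul_left k j Δ ω _ (mem_g2 k j Δ ω)

lemma qJ2 : (denseIdeal k j Δ ω).mkQ (J k ^ 2)
    = (denseIdeal k j Δ ω).mkQ (algebraMap ℂ (A k) (j ^ 2)) := by
  calc (denseIdeal k j Δ ω).mkQ (J k ^ 2)
      = (denseIdeal k j Δ ω).mkQ (J k * J k) := by rw [sq]
    _ = (denseIdeal k j Δ ω).mkQ (J k * algebraMap ℂ (A k) j) := qmul k j Δ ω _ (qJ k j Δ ω)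
    _ = (denseIdeal k j Δ ω).mkQ (algebraMap ℂ (A k) j * J k) := by rw [C_comm j (J k)]
    _ = (denseIdeal k j Δ ω).mkQ (algebraMap ℂ (A k) j * algebraMap ℂ (A k) j) :=
        qmul k j Δ ω _ (qJ k j Δ ω)
    _ = (denseIdeal k j Δ ω).mkQ (algebraMap ℂ (A k) (j ^ 2)) := by rw [← map_mul, ← sq]

lemma qJ3 : (denseIdeal k j Δ ω).mkQ (J k ^ 3)
    = (denseIdeal k j Δ ω).mkQ (algebraMap ℂ (A k) (j ^ 3)) := by
  calc (denseIdeal k j Δ ω).mkQ (J k ^ 3)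
      = (denseIdeal k j Δ ω).mkQ (J k ^ 2 * J k) := by
        rw [show J k ^ 3 = J k ^ 2 * J k from by noncomm_ring]
    _ = (denseIdeal k j Δ ω).mkQ (J k ^ 2 * algebraMap ℂ (A k) j) :=
        qmul k j Δ ω _ (qJ k j Δ ω)
    _ = (denseIdeal k j Δ ω).mkQ (algebraMap ℂ (A k) j * J k ^ 2) := by
        rw [C_comm j (J k ^ 2)]
    _ = (denseIdeal k j Δ ω).mkQ (algebraMap ℂ (A k) j * algebraMap ℂ (A k) (j ^ 2)) :=
        qmul k j Δ ω _ (qJ2 k j Δ ω)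
    _ = (denseIdeal k j Δ ω).mkQ (algebraMap ℂ (A k) (j ^ 3)) := by
        rw [← map_mul, show j * j ^ 2 = j ^ 3 by ring]

lemma qJE : (denseIdeal k j Δ ω).mkQ (J k * Ek k)
    = (denseIdeal k j Δ ω).mkQ (algebraMap ℂ (A k) (j * e0 k Δ)) := by
  calc (denseIdeal k j Δ ω).mkQ (J k * Ek k)
      = (denseIdeal k j Δ ω).mkQ (J k * algebraMap ℂ (A k) (e0 k Δ)) :=
        qmul k j Δ ω _ (qE k j Δ ω)
    _ = (denseIdeal k j Δ ω).mkQ (algebraMap ℂ (A k) (e0 k Δ) * J k) := by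
        rw [C_comm (e0 k Δ) (J k)]
    _ = (denseIdeal k j Δ ω).mkQ (algebraMap ℂ (A k) (e0 k Δ) * algebraMap ℂ (A k) j) :=
        qmul k j Δ ω _ (qJ k j Δ ω)
    _ = (denseIdeal k j Δ ω).mkQ (algebraMap ℂ (A k) (j * e0 k Δ)) := by
        rw [← map_mul, show e0 k Δ * j = j * e0 k Δ by ring]

lemma qF : (denseIdeal k j Δ ω).mkQ (Fk k)
    = (denseIdeal k j Δ ω).mkQ (algebraMap ℂ (A k) (3 * j ^ 2 - e0 k Δ)) := by
  have h1 : (denseIdeal k j Δ ω).mkQ (3 * J k ^ 2 : A k)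
      = (denseIdeal k j Δ ω).mkQ (3 * algebraMap ℂ (A k) (j ^ 2)) :=
    qmul k j Δ ω 3 (qJ2 k j Δ ω)
  calc (denseIdeal k j Δ ω).mkQ (Fk k)
      = (denseIdeal k j Δ ω).mkQ (3 * J k ^ 2 : A k)
        - (denseIdeal k j Δ ω).mkQ (Ek k) := by rw [Fk, map_sub]
    _ = (denseIdeal k j Δ ω).mkQ (3 * algebraMap ℂ (A k) (j ^ 2))
        - (denseIdeal k j Δ ω).mkQ (algebraMap ℂ (A k) (e0 k Δ)) := by
        rw [h1, qE]
    _ = (denseIdeal k j Δ ω).mkQ (algebraMap ℂ (A k) (3 * j ^ 2 - e0 k Δ)) := by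
        rw [← map_sub]
        congr 1
        simp only [map_sub, map_mul, map_ofNat]

end Values


section Key

variable (k j Δ ω : ℂ)

lemma two_eq : (2 : A k) = algebraMap ℂ (A k) 2 := (map_ofNat _ 2).symm

lemma half_two : algebraMap ℂ (A k) (1/2) * (2 : A k) = 1 := by
  rw [two_eq, ← map_mul]
  norm_num

lemma qGmGp : (denseIdeal k j Δ ω).mkQ (Gm k * Gp k)
    = (denseIdeal k j Δ ω).mkQ (algebraMap ℂ (A k) ((ω - omegaP k j Δ)/2)) := by
  have h2 : (denseIdeal k j Δ ω).mkQ (2 * (Gm k * Gp k) : A k)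
      = (denseIdeal k j Δ ω).mkQ (algebraMap ℂ (A k) (ω - omegaP k j Δ)) := by
    have hx1 : (denseIdeal k j Δ ω).mkQ (2 * J k ^ 3 : A k)
        = (denseIdeal k j Δ ω).mkQ (2 * algebraMap ℂ (A k) (j ^ 3)) :=
      qmul k j Δ ω 2 (qJ3 k j Δ ω)
    have hx2 : (denseIdeal k j Δ ω).mkQ (2 * (J k * Ek k) : A k)
        = (denseIdeal k j Δ ω).mkQ (2 * algebraMap ℂ (A k) (j * e0 k Δ)) :=
      qmul k j Δ ω 2 (qJE k j Δ ω)
    calc (denseIdeal k j Δ ω).mkQ (2 * (Gm k * Gp k) : A k)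
        = (denseIdeal k j Δ ω).mkQ
            (Omega k - Fk k - 2 * J k ^ 3 - J k + 2 * (J k * Ek k)) := by rw [twoGmGp]
      _ = (denseIdeal k j Δ ω).mkQ (Omega k) - (denseIdeal k j Δ ω).mkQ (Fk k)
          - (denseIdeal k j Δ ω).mkQ (2 * J k ^ 3 : A k) - (denseIdeal k j Δ ω).mkQ (J k)
          + (denseIdeal k j Δ ω).mkQ (2 * (J k * Ek k) : A k) := by
          simp only [map_sub, map_add]
      _ = (denseIdeal k j Δ ω).mkQ (algebraMap ℂ (A k) ω)
          - (denseIdeal k j Δ ω).mkQ (algebraMap ℂ (A k) (3 * j ^ 2 - e0 k Δ))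
          - (denseIdeal k j Δ ω).mkQ (2 * algebraMap ℂ (A k) (j ^ 3))
          - (denseIdeal k j Δ ω).mkQ (algebraMap ℂ (A k) j)
          + (denseIdeal k j Δ ω).mkQ (2 * algebraMap ℂ (A k) (j * e0 k Δ)) := by
          rw [qOm, qF, qJ, hx1, hx2]
      _ = (denseIdeal k j Δ ω).mkQ
            (algebraMap ℂ (A k) ω - algebraMap ℂ (A k) (3 * j ^ 2 - e0 k Δ)
              - 2 * algebraMap ℂ (A k) (j ^ 3) - algebraMap ℂ (A k) j
              + 2 * algebraMap ℂ (A k) (j * e0 k Δ)) := by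
          simp only [map_sub, map_add]
      _ = (denseIdeal k j Δ ω).mkQ (algebraMap ℂ (A k) (ω - omegaP k j Δ)) := by
          congr 1
          rw [two_eq]
          simp only [← map_mul, ← map_sub, ← map_add]
          congr 1
          unfold omegaP e0
          ring
  have h3 := qmul k j Δ ω (algebraMap ℂ (A k) (1/2)) h2
  have e1 : algebraMap ℂ (A k) (1/2) * (2 * (Gm k * Gp k)) = Gm k * Gp k := by
    rw [← mul_assoc, half_two, one_mul]
  have e2 : algebraMap ℂ (A k) (1/2) * algebraMap ℂ (A k) (ω - omegaP k j Δ)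
      = algebraMap ℂ (A k) ((ω - omegaP k j Δ)/2) := by
    rw [← map_mul]
    congr 1
    ring
  rwa [e1, e2] at h3

lemma qGpGm : (denseIdeal k j Δ ω).mkQ (Gp k * Gm k)
    = (denseIdeal k j Δ ω).mkQ (algebraMap ℂ (A k) ((ω - omegaM k j Δ)/2)) := by
  have h2 : (denseIdeal k j Δ ω).mkQ (2 * (Gp k * Gm k) : A k)
      = (denseIdeal k j Δ ω).mkQ (algebraMap ℂ (A k) (ω - omegaM k j Δ)) := by
    have hx1 : (denseIdeal k j Δ ω).mkQ (2 * J k ^ 3 : A k)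
        = (denseIdeal k j Δ ω).mkQ (2 * algebraMap ℂ (A k) (j ^ 3)) :=
      qmul k j Δ ω 2 (qJ3 k j Δ ω)
    have hx2 : (denseIdeal k j Δ ω).mkQ (2 * (J k * Ek k) : A k)
        = (denseIdeal k j Δ ω).mkQ (2 * algebraMap ℂ (A k) (j * e0 k Δ)) :=
      qmul k j Δ ω 2 (qJE k j Δ ω)
    calc (denseIdeal k j Δ ω).mkQ (2 * (Gp k * Gm k) : A k)
        = (denseIdeal k j Δ ω).mkQ
            (Omega k + Fk k - 2 * J k ^ 3 - J k + 2 * (J k * Ek k)) := by rw [twoGpGm]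
      _ = (denseIdeal k j Δ ω).mkQ (Omega k) + (denseIdeal k j Δ ω).mkQ (Fk k)
          - (denseIdeal k j Δ ω).mkQ (2 * J k ^ 3 : A k) - (denseIdeal k j Δ ω).mkQ (J k)
          + (denseIdeal k j Δ ω).mkQ (2 * (J k * Ek k) : A k) := by
          simp only [map_sub, map_add]
      _ = (denseIdeal k j Δ ω).mkQ (algebraMap ℂ (A k) ω)
          + (denseIdeal k j Δ ω).mkQ (algebraMap ℂ (A k) (3 * j ^ 2 - e0 k Δ))
          - (denseIdeal k j Δ ω).mkQ (2 * algebraMap ℂ (A k) (j ^ 3))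
          - (denseIdeal k j Δ ω).mkQ (algebraMap ℂ (A k) j)
          + (denseIdeal k j Δ ω).mkQ (2 * algebraMap ℂ (A k) (j * e0 k Δ)) := by
          rw [qOm, qF, qJ, hx1, hx2]
      _ = (denseIdeal k j Δ ω).mkQ
            (algebraMap ℂ (A k) ω + algebraMap ℂ (A k) (3 * j ^ 2 - e0 k Δ)
              - 2 * algebraMap ℂ (A k) (j ^ 3) - algebraMap ℂ (A k) j
              + 2 * algebraMap ℂ (A k) (j * e0 k Δ)) := by
          simp only [map_sub, map_add]
      _ = (denseIdeal k j Δ ω).mkQ (algebraMap ℂ (A k) (ω - omegaM k j Δ)) := by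
          congr 1
          rw [two_eq]
          simp only [← map_mul, ← map_sub, ← map_add]
          congr 1
          unfold omegaM e0
          ring
  have h3 := qmul k j Δ ω (algebraMap ℂ (A k) (1/2)) h2
  have e1 : algebraMap ℂ (A k) (1/2) * (2 * (Gp k * Gm k)) = Gp k * Gm k := by
    rw [← mul_assoc, half_two, one_mul]
  have e2 : algebraMap ℂ (A k) (1/2) * algebraMap ℂ (A k) (ω - omegaM k j Δ)
      = algebraMap ℂ (A k) ((ω - omegaM k j Δ)/2) := by
    rw [← map_mul]
    congr 1
    ring
  rwa [e1, e2] at h3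

end Key


section Shift

variable (k j Δ ω : ℂ)

lemma shift1m : (J k - algebraMap ℂ (A k) j) * Gm k
    = Gm k * (J k - algebraMap ℂ (A k) (j + 1)) := by
  rw [sub_mul, J_Gm, C_comm j (Gm k), map_add, map_one, mul_sub, mul_add, mul_one]
  noncomm_ring

lemma shift2m : (L k - algebraMap ℂ (A k) Δ) * Gm k
    = Gm k * (L k - algebraMap ℂ (A k) Δ) := by
  rw [sub_mul, L_Gm, C_comm Δ (Gm k)]
  noncomm_ring

lemma shift3m : (Omega k - algebraMap ℂ (A k) ω) * Gm k
    = Gm k * (Omega k - algebraMap ℂ (A k) ω) := by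
  rw [sub_mul, omega_Gm, C_comm ω (Gm k)]
  noncomm_ring

lemma shift1p : (J k - algebraMap ℂ (A k) (j + 1)) * Gp k
    = Gp k * (J k - algebraMap ℂ (A k) j) := by
  rw [sub_mul, J_Gp, C_comm (j+1) (Gp k), map_add, map_one, mul_sub, mul_add, mul_one]
  noncomm_ring

lemma shift2p : (L k - algebraMap ℂ (A k) Δ) * Gp k
    = Gp k * (L k - algebraMap ℂ (A k) Δ) := by
  rw [sub_mul, L_Gp, C_comm Δ (Gp k)]
  noncomm_ring

lemma shift3p : (Omega k - algebraMap ℂ (A k) ω) * Gp k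
    = Gp k * (Omega k - algebraMap ℂ (A k) ω) := by
  rw [sub_mul, omega_Gp, C_comm ω (Gp k)]
  noncomm_ring

end Shift


/-- if `ω ≠ ω⁺_{i,Δ}` for every `i ∈ j + ℤ`, then
`R_{j,Δ,ω} ≅ R_{j+1,Δ,ω}` as `A_k`-modules. -/
theorem dense_shift_iso (k j Δ ω : ℂ) (h : ∀ m : ℤ, ω ≠ omegaP k (j + m) Δ) :
    Nonempty (Rmod k j Δ ω ≃ₗ[A k] Rmod k (j + 1) Δ ω) := by
  have h0 : ω ≠ omegaP k j Δ := by
    have := h 0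
    push_cast at this
    rwa [add_zero] at this
  have hc0 : (ω - omegaP k j Δ) / 2 ≠ 0 := by
    intro hcc
    rcases div_eq_zero_iff.mp hcc with h1 | h2
    · exact h0 (sub_eq_zero.mp h1)
    · norm_num at h2
  -- the forward linear map, induced by right multiplication by `G⁻`
  let f₁ : A k →ₗ[A k] Rmod k (j+1) Δ ω :=
    LinearMap.toSpanSingleton (A k) _ ((denseIdeal k (j+1) Δ ω).mkQ (Gm k))
  have hf₁ : ∀ a : A k, f₁ a = (denseIdeal k (j+1) Δ ω).mkQ (a * Gm k) := by
    intro a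
    show a • (denseIdeal k (j+1) Δ ω).mkQ (Gm k) = _
    rw [← map_smul, smul_eq_mul]
  have hker₁ : denseIdeal k j Δ ω ≤ LinearMap.ker f₁ := by
    rw [denseIdeal, Submodule.span_le]
    intro x hx
    simp only [Set.mem_insert_iff, Set.mem_singleton_iff] at hx
    simp only [SetLike.mem_coe, LinearMap.mem_ker]
    have hz : ∀ y : A k, y ∈ denseIdeal k (j+1) Δ ω →
        (denseIdeal k (j+1) Δ ω).mkQ y = 0 := by
      intro y hy
      simpa [Submodule.mkQ_apply, Submodule.Quotient.mk_eq_zero] using hy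
    rcases hx with rfl | rfl | rfl
    · rw [hf₁, shift1m]
      exact hz _ (mem_mul_left k (j+1) Δ ω _ (mem_g1 k (j+1) Δ ω))
    · rw [hf₁, shift2m]
      exact hz _ (mem_mul_left k (j+1) Δ ω _ (mem_g2 k (j+1) Δ ω))
    · rw [hf₁, shift3m]
      exact hz _ (mem_mul_left k (j+1) Δ ω _ (mem_g3 k (j+1) Δ ω))
  -- the backward linear map, induced by right multiplication by `c⁻¹ G⁺`
  let f₂ : A k →ₗ[A k] Rmod k j Δ ω :=
    LinearMap.toSpanSingleton (A k) _
      ((denseIdeal k j Δ ω).mkQ (algebraMap ℂ (A k) (((ω - omegaP k j Δ) / 2)⁻¹) * Gp k))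
  have hf₂ : ∀ a : A k, f₂ a = (denseIdeal k j Δ ω).mkQ
      (a * (algebraMap ℂ (A k) (((ω - omegaP k j Δ) / 2)⁻¹) * Gp k)) := by
    intro a
    show a • (denseIdeal k j Δ ω).mkQ _ = _
    rw [← map_smul, smul_eq_mul]
  have hmove : ∀ y : A k, y * (algebraMap ℂ (A k) (((ω - omegaP k j Δ) / 2)⁻¹) * Gp k)
      = algebraMap ℂ (A k) (((ω - omegaP k j Δ) / 2)⁻¹) * (y * Gp k) := by
    intro y
    rw [← mul_assoc, ← C_comm (((ω - omegaP k j Δ) / 2)⁻¹) y, mul_assoc]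
  have hker₂ : denseIdeal k (j+1) Δ ω ≤ LinearMap.ker f₂ := by
    rw [denseIdeal, Submodule.span_le]
    intro x hx
    simp only [Set.mem_insert_iff, Set.mem_singleton_iff] at hx
    simp only [SetLike.mem_coe, LinearMap.mem_ker]
    have hz : ∀ y : A k, y ∈ denseIdeal k j Δ ω →
        (denseIdeal k j Δ ω).mkQ y = 0 := by
      intro y hy
      simpa [Submodule.mkQ_apply, Submodule.Quotient.mk_eq_zero] using hy
    rcases hx with rfl | rfl | rfl
    · rw [hf₂, hmove, shift1p]
      exact hz _ (mem_mul_left k j Δ ω _ (mem_mul_left k j Δ ω _ (mem_g1 k j Δ ω)))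
    · rw [hf₂, hmove, shift2p]
      exact hz _ (mem_mul_left k j Δ ω _ (mem_mul_left k j Δ ω _ (mem_g2 k j Δ ω)))
    · rw [hf₂, hmove, shift3p]
      exact hz _ (mem_mul_left k j Δ ω _ (mem_mul_left k j Δ ω _ (mem_g3 k j Δ ω)))
  let Φ : Rmod k j Δ ω →ₗ[A k] Rmod k (j+1) Δ ω := (denseIdeal k j Δ ω).liftQ f₁ hker₁
  let Ψ : Rmod k (j+1) Δ ω →ₗ[A k] Rmod k j Δ ω := (denseIdeal k (j+1) Δ ω).liftQ f₂ hker₂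
  -- Ψ ∘ Φ = id
  have hΨΦ : Ψ.comp Φ = LinearMap.id := by
    apply Submodule.linearMap_qext
    apply LinearMap.ext
    intro a
    simp only [LinearMap.comp_apply, Submodule.mkQ_apply, Submodule.liftQ_apply,
      LinearMap.id_apply, Φ, Ψ]
    rw [hf₁, Submodule.mkQ_apply, Submodule.liftQ_apply, hf₂]
    have step1 : (a * Gm k) * (algebraMap ℂ (A k) (((ω - omegaP k j Δ) / 2)⁻¹) * Gp k)
        = a * (algebraMap ℂ (A k) (((ω - omegaP k j Δ) / 2)⁻¹) * (Gm k * Gp k)) := by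
      calc (a * Gm k) * (algebraMap ℂ (A k) (((ω - omegaP k j Δ) / 2)⁻¹) * Gp k)
          = a * ((Gm k * algebraMap ℂ (A k) (((ω - omegaP k j Δ) / 2)⁻¹)) * Gp k) := by
            noncomm_ring
        _ = a * ((algebraMap ℂ (A k) (((ω - omegaP k j Δ) / 2)⁻¹) * Gm k) * Gp k) := by
            rw [C_comm (((ω - omegaP k j Δ) / 2)⁻¹) (Gm k)]
        _ = a * (algebraMap ℂ (A k) (((ω - omegaP k j Δ) / 2)⁻¹) * (Gm k * Gp k)) := by
            noncomm_ring
    rw [step1]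
    have step2 : (denseIdeal k j Δ ω).mkQ
        (algebraMap ℂ (A k) (((ω - omegaP k j Δ) / 2)⁻¹) * (Gm k * Gp k))
        = (denseIdeal k j Δ ω).mkQ 1 := by
      have h4 := qmul k j Δ ω (algebraMap ℂ (A k) (((ω - omegaP k j Δ) / 2)⁻¹))
        (qGmGp k j Δ ω)
      rwa [← map_mul, inv_mul_cancel₀ hc0, map_one] at h4
    have h5 := qmul k j Δ ω a step2
    rw [mul_one] at h5
    rw [← Submodule.mkQ_apply, h5]
  -- Φ ∘ Ψ = id
  have hΦΨ : Φ.comp Ψ = LinearMap.id := by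
    apply Submodule.linearMap_qext
    apply LinearMap.ext
    intro a
    simp only [LinearMap.comp_apply, Submodule.mkQ_apply, Submodule.liftQ_apply,
      LinearMap.id_apply, Φ, Ψ]
    rw [hf₂, Submodule.mkQ_apply, Submodule.liftQ_apply, hf₁]
    have step1 : (a * (algebraMap ℂ (A k) (((ω - omegaP k j Δ) / 2)⁻¹) * Gp k)) * Gm k
        = a * (algebraMap ℂ (A k) (((ω - omegaP k j Δ) / 2)⁻¹) * (Gp k * Gm k)) := by
      noncomm_ring
    rw [step1]
    have hMP : (ω - omegaM k (j+1) Δ) / 2 = (ω - omegaP k j Δ) / 2 := by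
      unfold omegaM omegaP
      ring
    have step2 : (denseIdeal k (j+1) Δ ω).mkQ
        (algebraMap ℂ (A k) (((ω - omegaP k j Δ) / 2)⁻¹) * (Gp k * Gm k))
        = (denseIdeal k (j+1) Δ ω).mkQ 1 := by
      have h4 := qmul k (j+1) Δ ω (algebraMap ℂ (A k) (((ω - omegaP k j Δ) / 2)⁻¹))
        (qGpGm k (j+1) Δ ω)
      rw [hMP] at h4
      rwa [← map_mul, inv_mul_cancel₀ hc0, map_one] at h4
    have h5 := qmul k (j+1) Δ ω a step2
    rw [mul_one] at h5
    rw [← Submodule.mkQ_apply, h5]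
  exact ⟨LinearEquiv.ofLinear Φ Ψ hΦΨ hΨΦ⟩

end BP
end
end

section
/- For all j, Δ, ω ∈ ℂ, the σ-twist of the A_k-module R_{j,Δ,ω} is isomorphic to R_{−j,Δ,−ω}. -/
noncomputable section

namespace BP

/-- The `σ`-twist `σ*(M)` of an `A_k`-module `M`: the same underlying abelian group,
with the action `a ⋆ m = σ⁻¹(a) • m`. -/
def Twist (k : ℂ) (_σ : A k ≃ₐ[ℂ] A k) (M : Type) [AddCommGroup M] [Module (A k) M] :
    Type := M

instance (k : ℂ) (σ : A k ≃ₐ[ℂ] A k) (M : Type) [AddCommGroup M] [Module (A k) M] :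
    AddCommGroup (Twist k σ M) := inferInstanceAs (AddCommGroup M)

instance (k : ℂ) (σ : A k ≃ₐ[ℂ] A k) (M : Type) [AddCommGroup M] [Module (A k) M] :
    Module (A k) (Twist k σ M) :=
  Module.compHom M (σ.symm.toAlgHom.toRingHom)

/-- for the conjugation automorphism `σ` (determined by `σ(J) = −J`,
`σ(G⁺) = G⁻`, `σ(G⁻) = −G⁺`, `σ(L) = L`), the `σ`-twist of `R_{j,Δ,ω}` is isomorphic to
`R_{−j,Δ,−ω}`. -/
theorem twist_dense_iso (k j Δ ω : ℂ) (σ : A k ≃ₐ[ℂ] A k)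
    (h1 : σ (J k) = -J k) (h2 : σ (Gp k) = Gm k) (h3 : σ (Gm k) = -Gp k)
    (h4 : σ (L k) = L k) :
    Nonempty (Twist k σ (Rmod k j Δ ω) ≃ₗ[A k] Rmod k (-j) Δ (-ω)) := by
  have s1 : σ.symm (J k) = -(J k) := by
    apply σ.injective; rw [σ.apply_symm_apply, map_neg, h1, neg_neg]
  have s4 : σ.symm (L k) = L k := by
    apply σ.injective; rw [σ.apply_symm_apply, h4]
  have hO : σ (Omega k) = -(Omega k) := by
    unfold Omega
    simp only [map_add, map_sub, map_mul, map_pow, map_neg, h1, h2, h3, h4,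
      AlgEquiv.commutes, map_ofNat]
    noncomm_ring
  have hO' : σ.symm (Omega k) = -(Omega k) := by
    apply σ.injective; rw [σ.apply_symm_apply, map_neg, hO, neg_neg]
  -- the forward linear map from A to the twist
  let φ : A k →ₗ[A k] Twist k σ (Rmod k j Δ ω) :=
    { toFun := fun x => (Submodule.Quotient.mk (σ.symm x) : Rmod k j Δ ω)
      map_add' := fun x y => by
        show (Submodule.Quotient.mk (σ.symm (x + y)) : Rmod k j Δ ω)
            = Submodule.Quotient.mk (σ.symm x) + Submodule.Quotient.mk (σ.symm y)
        rw [map_add]; rfl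
      map_smul' := fun a x => by
        show (Submodule.Quotient.mk (σ.symm (a • x)) : Rmod k j Δ ω)
            = σ.symm a • (Submodule.Quotient.mk (σ.symm x) : Rmod k j Δ ω)
        rw [← Submodule.Quotient.mk_smul, smul_eq_mul, smul_eq_mul, map_mul] }
  have hle : denseIdeal k (-j) Δ (-ω) ≤ LinearMap.ker φ := by
    rw [denseIdeal, Submodule.span_le]
    intro x hx
    simp only [Set.mem_insert_iff, Set.mem_singleton_iff] at hx
    rw [SetLike.mem_coe, LinearMap.mem_ker]
    rcases hx with rfl | rfl | rfl
    · show (Submodule.Quotient.mk (σ.symm (J k - algebraMap ℂ (A k) (-j))) : Rmod k j Δ ω) = 0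
      rw [map_sub, s1, AlgEquiv.commutes, Submodule.Quotient.mk_eq_zero]
      have h : -(J k) - algebraMap ℂ (A k) (-j) = -(J k - algebraMap ℂ (A k) j) := by
        rw [map_neg]; abel
      rw [h]
      exact neg_mem (Submodule.subset_span (Set.mem_insert _ _))
    · show (Submodule.Quotient.mk (σ.symm (L k - algebraMap ℂ (A k) Δ)) : Rmod k j Δ ω) = 0
      rw [map_sub, s4, AlgEquiv.commutes, Submodule.Quotient.mk_eq_zero]
      exact Submodule.subset_span (Set.mem_insert_of_mem _ (Set.mem_insert _ _))
    · show (Submodule.Quotient.mk (σ.symm (Omega k - algebraMap ℂ (A k) (-ω))) : Rmod k j Δ ω) = 0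
      rw [map_sub, hO', AlgEquiv.commutes, Submodule.Quotient.mk_eq_zero]
      have h : -(Omega k) - algebraMap ℂ (A k) (-ω)
          = -(Omega k - algebraMap ℂ (A k) ω) := by
        rw [map_neg]; abel
      rw [h]
      exact neg_mem (Submodule.subset_span (by simp))
  let Φ : Rmod k (-j) Δ (-ω) →ₗ[A k] Twist k σ (Rmod k j Δ ω) :=
    (denseIdeal k (-j) Δ (-ω)).liftQ φ hle
  -- σ maps the ideal for (j, Δ, ω) into the one for (-j, Δ, -ω)
  have hker : ∀ z ∈ denseIdeal k j Δ ω, σ z ∈ denseIdeal k (-j) Δ (-ω) := by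
    intro z hz
    induction hz using Submodule.span_induction with
    | mem x hx =>
      simp only [Set.mem_insert_iff, Set.mem_singleton_iff] at hx
      rcases hx with rfl | rfl | rfl
      · rw [map_sub, h1, AlgEquiv.commutes]
        have h : -(J k) - algebraMap ℂ (A k) j
            = -(J k - algebraMap ℂ (A k) (-j)) := by
          rw [map_neg]; abel
        rw [h]
        exact neg_mem (Submodule.subset_span (Set.mem_insert _ _))
      · rw [map_sub, h4, AlgEquiv.commutes]
        exact Submodule.subset_span (Set.mem_insert_of_mem _ (Set.mem_insert _ _))
      · rw [map_sub, hO, AlgEquiv.commutes]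
        have h : -(Omega k) - algebraMap ℂ (A k) ω
            = -(Omega k - algebraMap ℂ (A k) (-ω)) := by
          rw [map_neg]; abel
        rw [h]
        exact neg_mem (Submodule.subset_span (by simp))
    | zero => simp
    | add x y _ _ hx hy => rw [map_add]; exact add_mem hx hy
    | smul a x _ hx =>
      rw [smul_eq_mul, map_mul, ← smul_eq_mul]
      exact Submodule.smul_mem _ _ hx
  have hinj : Function.Injective Φ := by
    intro x y hxy
    obtain ⟨a, rfl⟩ := Submodule.Quotient.mk_surjective _ x
    obtain ⟨b, rfl⟩ := Submodule.Quotient.mk_surjective _ y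
    rw [Submodule.liftQ_apply, Submodule.liftQ_apply] at hxy
    have h' : (Submodule.Quotient.mk (σ.symm a) : Rmod k j Δ ω)
        = Submodule.Quotient.mk (σ.symm b) := hxy
    rw [Submodule.Quotient.eq] at h'
    have h2' := hker _ h'
    rw [map_sub, σ.apply_symm_apply, σ.apply_symm_apply] at h2'
    exact (Submodule.Quotient.eq _).mpr h2'
  have hsurj : Function.Surjective Φ := by
    intro y
    obtain ⟨x, hx⟩ := Submodule.Quotient.mk_surjective (denseIdeal k j Δ ω)
      (show Rmod k j Δ ω from y)
    refine ⟨Submodule.Quotient.mk (σ x), ?_⟩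
    show (Submodule.Quotient.mk (σ.symm (σ x)) : Rmod k j Δ ω) = _
    rw [σ.symm_apply_apply, hx]
  exact ⟨(LinearEquiv.ofBijective Φ ⟨hinj, hsurj⟩).symm⟩

end BP
end
end

section
/- Let u ≥ 3 and v ≥ 2 be coprime integers and set k = −3 + u/v. Then the map S_{u,v} → ℚ × ℚ sending λ to (j(λ), Δ(λ)) is injective: distinct surviving weights give distinct pairs (j, Δ). -/
namespace BPW

/-- A triple of natural numbers `(a₀, a₁, a₂)` (the Dynkin labels of a dominant
integral `sl₃` weight). -/
abbrev Triple : Type := ℕ × ℕ × ℕ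

/-- A weight `λ = (λ^I, λ^F)` consisting of an integral part and a fractional part. -/
abbrev Wt : Type := Triple × Triple

/-- The sum `a₀ + a₁ + a₂` of the entries of a triple. -/
def sumT (a : Triple) : ℕ := a.1 + a.2.1 + a.2.2

/-- `λ = (λ^I, λ^F)` is a *surviving weight* if `λ^I ∈ P^{u−3}`, `λ^F ∈ P^{v−1}`
and `λ^F₀ ≥ 1`. -/
def Surviving (u v : ℕ) (w : Wt) : Prop :=
  sumT w.1 = u - 3 ∧ sumT w.2 = v - 1 ∧ 1 ≤ w.2.1

/-- `λ ∈ Γ_{u,v}` iff `λ` is surviving and `λ^F₁ ≥ 1`. -/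
def InGamma (u v : ℕ) (w : Wt) : Prop :=
  Surviving u v w ∧ 1 ≤ w.2.2.1

/-- The level `k = −3 + u/v`. -/
def kQ (u v : ℕ) : ℚ := -3 + (u : ℚ) / (v : ℚ)

/-- The Dynkin label `λ₁ = λ^I₁ − (u/v)·λ^F₁`. -/
def dyn1 (u v : ℕ) (w : Wt) : ℚ := (w.1.2.1 : ℚ) - (u : ℚ) / (v : ℚ) * (w.2.2.1 : ℚ)

/-- The Dynkin label `λ₂ = λ^I₂ − (u/v)·λ^F₂`. -/
def dyn2 (u v : ℕ) (w : Wt) : ℚ := (w.1.2.2 : ℚ) - (u : ℚ) / (v : ℚ) * (w.2.2.2 : ℚ)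

/-- The charge `j(λ) = (λ₁ − λ₂)/3`. -/
def jwt (u v : ℕ) (w : Wt) : ℚ := (dyn1 u v w - dyn2 u v w) / 3

/-- The conformal weight
`Δ(λ) = [(λ₁−λ₂)² − 3(λ₁+λ₂)(2(k+1)−λ₁−λ₂)]/(12(k+3))`. -/
def Dwt (u v : ℕ) (w : Wt) : ℚ :=
  ((dyn1 u v w - dyn2 u v w) ^ 2
      - 3 * (dyn1 u v w + dyn2 u v w) * (2 * (kQ u v + 1) - dyn1 u v w - dyn2 u v w))
    / (12 * (kQ u v + 3))

/-- The twisted charge `j^tw(λ) = (λ₁ − λ₂)/3 + (2k+3)/6`. -/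
def jtw (u v : ℕ) (w : Wt) : ℚ := jwt u v w + (2 * kQ u v + 3) / 6

/-- The twisted conformal weight `Δ^tw(λ) = Δ(λ) + (λ₁ − λ₂)/6 + (2k+3)/24`. -/
def Dtw (u v : ℕ) (w : Wt) : ℚ :=
  Dwt u v w + (dyn1 u v w - dyn2 u v w) / 6 + (2 * kQ u v + 3) / 24

/-- `ω(λ) = −(2/27)(λ₁−λ₂+k+3)(2λ₁+λ₂−k)(λ₁+2λ₂−2k−3)`. -/
def omg (u v : ℕ) (w : Wt) : ℚ :=
  -(2/27) * (dyn1 u v w - dyn2 u v w + kQ u v + 3)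
    * (2 * dyn1 u v w + dyn2 u v w - kQ u v)
    * (dyn1 u v w + 2 * dyn2 u v w - 2 * kQ u v - 3)

lemma aux_eq_self {v m : ℤ} (hv : 0 < v) (h : v ∣ m) (h1 : 0 < m) (h2 : m < 2*v) : m = v := by
  obtain ⟨c, rfl⟩ := h
  have h3 : c < 2 := Int.lt_of_mul_lt_mul_left (by linarith) hv.le
  have h4 : 0 < c := Int.lt_of_mul_lt_mul_left (by linarith) hv.le
  have : c = 1 := by omega
  simp [this]

lemma aux_trich {v m : ℤ} (hv : 0 < v) (h : v ∣ m) (h1 : -(2*v) < m) (h2 : m < 2*v) :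
    m = -v ∨ m = 0 ∨ m = v := by
  obtain ⟨c, rfl⟩ := h
  have h3 : c < 2 := Int.lt_of_mul_lt_mul_left (by linarith) hv.le
  have h4 : -2 < c := Int.lt_of_mul_lt_mul_left (by linarith) hv.le
  have : c = -1 ∨ c = 0 ∨ c = 1 := by omega
  rcases this with rfl | rfl | rfl
  · left; ring
  · right; left; ring
  · right; right; ring

/-- the map `S_{u,v} → ℚ × ℚ`, `λ ↦ (j(λ), Δ(λ))`, is injective. -/
theorem j_Delta_injective (u v : ℕ) (hu : 3 ≤ u) (hv : 2 ≤ v) (hcop : Nat.Coprime u v)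
    (w w' : Wt) (hw : Surviving u v w) (hw' : Surviving u v w')
    (hj : jwt u v w = jwt u v w') (hD : Dwt u v w = Dwt u v w') :
    w = w' := by
  obtain ⟨⟨x0, x1, x2⟩, ⟨y0, y1, y2⟩⟩ := w
  obtain ⟨⟨a0, a1, a2⟩, ⟨b0, b1, b2⟩⟩ := w'
  obtain ⟨hwx, hwy, hwy0⟩ := hw
  obtain ⟨hax, hay, hay0⟩ := hw'
  simp only [sumT] at hwx hwy hax hay
  simp only at hwy0 hay0
  have hv0 : (v:ℚ) ≠ 0 := Nat.cast_ne_zero.mpr (by omega)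
  have hu0 : (u:ℚ) ≠ 0 := Nat.cast_ne_zero.mpr (by omega)
  have hvz : (v:ℤ) ≠ 0 := by exact_mod_cast Nat.cast_ne_zero.mpr (show v ≠ 0 by omega)
  have hvpos : (0:ℤ) < v := by exact_mod_cast Nat.pos_of_ne_zero (by omega)
  have hcv : IsCoprime (v:ℤ) (u:ℤ) := Nat.isCoprime_iff_coprime.mpr hcop.symm
  set t : ℚ := (u:ℚ)/(v:ℚ) with ht
  simp only [jwt, dyn1, dyn2, Dwt, kQ] at hj hD
  have hj' : (x1:ℚ) - t*(y1:ℚ) - ((x2:ℚ) - t*(y2:ℚ))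
      = (a1:ℚ) - t*(b1:ℚ) - ((a2:ℚ) - t*(b2:ℚ)) := by linarith
  -- integer version of j-equality
  have hE1 : (v:ℤ)*((x1:ℤ) - x2 - a1 + a2) = (u:ℤ)*((y1:ℤ) - y2 - b1 + b2) := by
    have hq : (v:ℚ)*((x1:ℚ) - x2 - a1 + a2) = (u:ℚ)*((y1:ℚ) - y2 - b1 + b2) := by
      rw [ht] at hj'; field_simp at hj'; linarith
    exact_mod_cast hq
  -- denominator is nonzero
  have htz : 12 * (-3 + t + 3) ≠ 0 := by
    rw [ht]; field_simp; ring_nf; simp [hu0, hv0]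
  -- numerator equality
  have hN : ((x1:ℚ) - t*y1 - ((x2:ℚ) - t*y2)) ^ 2
      - 3 * ((x1:ℚ) - t*y1 + ((x2:ℚ) - t*y2)) * (2 * (-3 + t + 1) - ((x1:ℚ) - t*y1) - ((x2:ℚ) - t*y2))
      = ((a1:ℚ) - t*b1 - ((a2:ℚ) - t*b2)) ^ 2
      - 3 * ((a1:ℚ) - t*b1 + ((a2:ℚ) - t*b2)) * (2 * (-3 + t + 1) - ((a1:ℚ) - t*b1) - ((a2:ℚ) - t*b2)) :=
    (div_left_inj' htz).mp hD
  -- key factored identity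
  have key : (((x1:ℚ)+x2) - t*((y1:ℚ)+y2) - (((a1:ℚ)+a2) - t*((b1:ℚ)+b2)))
      * ((((x1:ℚ)+x2) - t*((y1:ℚ)+y2)) + (((a1:ℚ)+a2) - t*((b1:ℚ)+b2)) - (2*t - 4)) = 0 := by
    linear_combination (1/3) * hN
      - (1/3) * (((x1:ℚ) - t*y1 - ((x2:ℚ) - t*y2)) + ((a1:ℚ) - t*b1 - ((a2:ℚ) - t*b2))) * hj'
  rcases mul_eq_zero.mp key with hs | hs
  · -- Case A : λ₁+λ₂ equal, hence λ₁ = λ₁', λ₂ = λ₂'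
    have h1 : (x1:ℚ) - t*y1 = (a1:ℚ) - t*b1 := by linarith
    have h2 : (x2:ℚ) - t*y2 = (a2:ℚ) - t*b2 := by linarith
    have h1z : (v:ℤ)*(x1:ℤ) - (u:ℤ)*(y1:ℤ) = (v:ℤ)*(a1:ℤ) - (u:ℤ)*(b1:ℤ) := by
      have hq : (v:ℚ)*x1 - (u:ℚ)*y1 = (v:ℚ)*a1 - (u:ℚ)*b1 := by
        rw [ht] at h1; field_simp at h1; linarith
      exact_mod_cast hq
    have h2z : (v:ℤ)*(x2:ℤ) - (u:ℤ)*(y2:ℤ) = (v:ℤ)*(a2:ℤ) - (u:ℤ)*(b2:ℤ) := by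
      have hq : (v:ℚ)*x2 - (u:ℚ)*y2 = (v:ℚ)*a2 - (u:ℚ)*b2 := by
        rw [ht] at h2; field_simp at h2; linarith
      exact_mod_cast hq
    have hd1 : (v:ℤ) ∣ (u:ℤ) * ((y1:ℤ) - b1) := ⟨(x1:ℤ) - a1, by linarith⟩
    have hd2 : (v:ℤ) ∣ (u:ℤ) * ((y2:ℤ) - b2) := ⟨(x2:ℤ) - a2, by linarith⟩
    have hy1 : (y1:ℤ) - b1 = 0 := by
      refine Int.eq_zero_of_abs_lt_dvd (hcv.dvd_of_dvd_mul_left hd1) ?_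
      rw [abs_lt]; omega
    have hy2 : (y2:ℤ) - b2 = 0 := by
      refine Int.eq_zero_of_abs_lt_dvd (hcv.dvd_of_dvd_mul_left hd2) ?_
      rw [abs_lt]; omega
    have hx1 : (x1:ℤ) - a1 = 0 := by
      rcases mul_eq_zero.mp (show (v:ℤ)*((x1:ℤ)-a1) = 0 by linear_combination h1z + (u:ℤ)*hy1)
        with h | h
      · exact absurd h hvz
      · exact h
    have hx2 : (x2:ℤ) - a2 = 0 := by
      rcases mul_eq_zero.mp (show (v:ℤ)*((x2:ℤ)-a2) = 0 by linear_combination h2z + (u:ℤ)*hy2)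
        with h | h
      · exact absurd h hvz
      · exact h
    simp only [Prod.mk.injEq]
    omega
  · -- Case B : λ₁+λ₂ + λ₁'+λ₂' = 2k+2, leads to contradiction
    exfalso
    have hBz : (v:ℤ)*((x1:ℤ)+x2+a1+a2+4) = (u:ℤ)*((y1:ℤ)+y2+b1+b2+2) := by
      have hq : (v:ℚ)*((x1:ℚ)+x2+a1+a2+4) = (u:ℚ)*((y1:ℚ)+y2+b1+b2+2) := by
        rw [ht] at hs; field_simp at hs; linarith
      exact_mod_cast hq
    have hdY : (v:ℤ) ∣ (u:ℤ) * ((y1:ℤ)+y2+b1+b2+2) := ⟨(x1:ℤ)+x2+a1+a2+4, hBz.symm⟩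
    have hYv : (y1:ℤ)+y2+b1+b2+2 = v := by
      refine aux_eq_self hvpos (hcv.dvd_of_dvd_mul_left hdY) (by omega) (by omega)
    have hXu : (x1:ℤ)+x2+a1+a2+4 = u := by
      have h : ((x1:ℤ)+x2+a1+a2+4) * v = (u:ℤ) * v := by
        rw [mul_comm ((x1:ℤ)+x2+a1+a2+4) (v:ℤ), hBz, hYv]
      exact mul_right_cancel₀ hvz h
    have hdq : (v:ℤ) ∣ (u:ℤ) * ((y1:ℤ) - y2 - b1 + b2) := ⟨(x1:ℤ) - x2 - a1 + a2, hE1.symm⟩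
    rcases aux_trich hvpos (hcv.dvd_of_dvd_mul_left hdq) (by omega) (by omega) with h | h | h
    · omega
    · -- q = 0 : parity contradiction via coprimality
      have hx : (x1:ℤ) - x2 - a1 + a2 = 0 := by
        rcases mul_eq_zero.mp (show (v:ℤ)*((x1:ℤ)-x2-a1+a2) = 0 by
          rw [hE1, h, mul_zero]) with h' | h'
        · exact absurd h' hvz
        · exact h'
      have h2u : 2 ∣ u := by omega
      have h2v : 2 ∣ v := by omega
      have : (2:ℕ) ∣ 1 := hcop ▸ Nat.dvd_gcd h2u h2v
      omega
    · omega

end BPW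
end
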